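/- arXiv:1707.02700 — 7 statements merged into one kernel-verified Lean document; each statement's English description precedes it below -/
import Mathlib

section
/- Let $A$ be an $n\times n$ Jacobi matrix with orthogonal polynomials $\{p_k\}$. Define the minor polynomials $p_\ell^{(k)}(x) = \sum_{j=1}^n q_j^2 p_k(\lambda_j)\frac{p_\ell(x)-p_\ell(\lambda_j)}{x-\lambda_j}$. Then $x p_\ell^{(k)}(x) = a_{\ell+1}p_{\ell+1}^{(k)}(x) + b_{\ell+1}p_\ell^{(k)}(x) + a_\ell p_{\ell-1}^{(k)}(x) - \delta_{k,\ell}$; i.e., the minor polynomials satisfy the same three-term recurrence as $\{p_\ell\}$ except for a defect $-\delta_{k,\ell}$ at $\ell = k$. -/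
open Polynomial Finset

lemma key_div (f : Polynomial ℝ) (c : ℝ) :
    (X - C c) * ((f - C (f.eval c)) /ₘ (X - C c)) = f - C (f.eval c) := by
  have h : (f - C (f.eval c)) %ₘ (X - C c) = 0 := by
    rw [Polynomial.modByMonic_X_sub_C_eq_C_eval]
    simp
  have h2 := Polynomial.modByMonic_add_div (f - C (f.eval c)) (X - C c)
  rw [h, zero_add] at h2
  exact h2

lemma perI (a b : ℕ → ℝ) (p : ℕ → Polynomial ℝ) (h0 : p 0 = 1)
    (hbase : (X : Polynomial ℝ) * p 0 = C (a 1) * p 1 + C (b 1) * p 0)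
    (hrec : ∀ k : ℕ, (X : Polynomial ℝ) * p (k + 1) =
      C (a (k + 2)) * p (k + 2) + C (b (k + 2)) * p (k + 1) + C (a (k + 1)) * p k)
    (lam : ℝ) (l : ℕ) :
    X * ((p l - C ((p l).eval lam)) /ₘ (X - C lam)) =
      C (a (l+1)) * ((p (l+1) - C ((p (l+1)).eval lam)) /ₘ (X - C lam)) +
      C (b (l+1)) * ((p l - C ((p l).eval lam)) /ₘ (X - C lam)) +
      C (a l) * ((p (l-1) - C ((p (l-1)).eval lam)) /ₘ (X - C lam)) -
      C ((p l).eval lam) := by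
  have hne : (X - C lam : Polynomial ℝ) ≠ 0 := X_sub_C_ne_zero lam
  apply mul_left_cancel₀ hne
  cases l with
  | zero =>
    have k1 := key_div (p 1) lam
    have heval := congrArg (eval lam) hbase
    simp only [h0, eval_mul, eval_one, eval_add, eval_C, eval_X, mul_one] at heval
    have heval'' : (C lam : Polynomial ℝ) = C (a 1) * C ((p 1).eval lam) + C (b 1) := by
      simp only [← C_mul, ← C_add]; exact congrArg C heval
    simp only [h0, eval_one, map_one, sub_self, Polynomial.zero_divByMonic, Nat.zero_sub]
    rw [h0] at hbase
    linear_combination hbase - heval'' - C (a 1) * k1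
  | succ m =>
    simp only [Nat.succ_sub_one]
    have k0 := key_div (p m) lam
    have k1 := key_div (p (m+1)) lam
    have k2 := key_div (p (m+2)) lam
    have heval := congrArg (eval lam) (hrec m)
    simp only [eval_mul, eval_add, eval_C, eval_X] at heval
    have heval' : C lam * C ((p (m+1)).eval lam) =
        C (a (m+2)) * C ((p (m+2)).eval lam) + C (b (m+2)) * C ((p (m+1)).eval lam) +
        C (a (m+1)) * C ((p m).eval lam) := by
      simp only [← C_mul, ← C_add]
      exact congrArg C heval
    linear_combination (hrec m) - heval' + X * k1 - C (a (m+2)) * k2 - C (b (m+2)) * k1 - C (a (m+1)) * k0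

/-- The minor polynomials satisfy the same three-term recurrence as the orthogonal
polynomials, up to a defect `-δ_{k,ℓ}`. -/
theorem minor_polynomial_recurrence
    (n : ℕ)
    (a b : ℕ → ℝ) (p : ℕ → Polynomial ℝ)
    (hpos : ∀ k, 1 ≤ k → 0 < a k)
    (h0 : p 0 = 1)
    (hbase : (X : Polynomial ℝ) * p 0 = C (a 1) * p 1 + C (b 1) * p 0)
    (hrec : ∀ k : ℕ, (X : Polynomial ℝ) * p (k + 1) =
      C (a (k + 2)) * p (k + 2) + C (b (k + 2)) * p (k + 1) + C (a (k + 1)) * p k)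
    (lam : Fin n → ℝ) (hl : Function.Injective lam)
    (q : Fin n → ℝ)
    (horth : ∀ k l : ℕ, k < n → l < n →
      ∑ i, q i ^ 2 * (p k).eval (lam i) * (p l).eval (lam i) =
        if k = l then 1 else 0)
    (pm : ℕ → ℕ → Polynomial ℝ)
    (hpm : ∀ k l : ℕ, pm k l =
      ∑ i, C (q i ^ 2 * (p k).eval (lam i)) *
        ((p l - C ((p l).eval (lam i))) /ₘ (X - C (lam i))))
    (k l : ℕ) (hk : k < n) (hl' : l < n) :
    (X : Polynomial ℝ) * pm k l =
      C (a (l + 1)) * pm k (l + 1) + C (b (l + 1)) * pm k l +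
        C (a l) * pm k (l - 1) - (if k = l then 1 else 0) := by
  have hdelta : (if k = l then (1 : Polynomial ℝ) else 0) =
      ∑ i, C (q i ^ 2 * (p k).eval (lam i) * (p l).eval (lam i)) := by
    rw [← map_sum, horth k l hk hl']
    split <;> simp
  rw [hpm k l, hpm k (l+1), hpm k (l-1), hdelta]
  rw [Finset.mul_sum, Finset.mul_sum, Finset.mul_sum, Finset.mul_sum]
  rw [← Finset.sum_add_distrib, ← Finset.sum_add_distrib, ← Finset.sum_sub_distrib]
  apply Finset.sum_congr rfl
  intro i _
  have h := perI a b p h0 hbase hrec (lam i) l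
  simp only [C_mul]
  linear_combination (C (q i ^ 2) * C ((p k).eval (lam i))) * h
end

section
/- For the orthogonal polynomials $\{p_\ell\}$ and minor polynomials $\{p_\ell^{(k)}\}$ of a Jacobi matrix: $\frac{p_\ell(x)-p_\ell(y)}{x-y} = \sum_{k=1}^{\ell} p_\ell^{(k-1)}(x)\, p_{k-1}(y)$ as polynomials in $x$ and $y$, and consequently $p_\ell'(x) = \sum_{k=1}^{\ell} p_\ell^{(k-1)}(x)\,p_{k-1}(x)$. -/
open Polynomial Finset


lemma dq_mul (f : Polynomial ℝ) (y : ℝ) :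
    (X - C y) * ((f - C (f.eval y)) /ₘ (X - C y)) = f - C (f.eval y) := by
  have h := modByMonic_add_div (f - C (f.eval y)) (X - C y)
  rw [modByMonic_X_sub_C_eq_C_eval] at h
  simpa using h

lemma dq_symm (f : Polynomial ℝ) (x y : ℝ) :
    ((f - C (f.eval y)) /ₘ (X - C y)).eval x
      = ((f - C (f.eval x)) /ₘ (X - C x)).eval y := by
  rcases eq_or_ne x y with rfl | hxy
  · rfl
  · have h1 := congrArg (eval x) (dq_mul f y)
    have h2 := congrArg (eval y) (dq_mul f x)
    simp only [eval_mul, eval_sub, eval_X, eval_C] at h1 h2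
    have hx : x - y ≠ 0 := sub_ne_zero.mpr hxy
    apply mul_left_cancel₀ hx
    rw [h1]
    have : (y - x) * eval y ((f - C (f.eval x)) /ₘ (X - C x)) = f.eval y - f.eval x := h2
    nlinarith [this]

lemma dq_eval_self (f : Polynomial ℝ) (y : ℝ) :
    ((f - C (f.eval y)) /ₘ (X - C y)).eval y = (derivative f).eval y := by
  have h := congrArg (fun g => (derivative g).eval y) (dq_mul f y)
  simp only [derivative_mul, derivative_sub, derivative_X, derivative_C, eval_add, eval_mul,
    eval_sub, eval_X, eval_C, sub_zero, sub_self, zero_mul, one_mul, zero_add] at h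
  linarith [h]

lemma dq_degree_lt (f : Polynomial ℝ) (y : ℝ) (L : ℕ) (hf : f.degree ≤ L) :
    ((f - C (f.eval y)) /ₘ (X - C y)).degree < L := by
  have hg : (f - C (f.eval y)).degree ≤ L :=
    le_trans (degree_sub_le _ _) (max_le hf (le_trans degree_C_le (by exact_mod_cast Nat.cast_nonneg L)))
  rcases eq_or_ne (f - C (f.eval y)) 0 with h0 | h0
  · rw [h0, zero_divByMonic, degree_zero]
    exact WithBot.bot_lt_coe L
  · exact lt_of_lt_of_le (degree_divByMonic_lt _ (X - C y) h0
      (by rw [degree_X_sub_C]; norm_num)) hg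


lemma expand_lemma (n : ℕ) (lam q : Fin n → ℝ) (p : ℕ → Polynomial ℝ)
    (hdeg : ∀ k, (p k).degree = k)
    (horth : ∀ k l : ℕ, k < n → l < n →
      ∑ i, q i ^ 2 * (p k).eval (lam i) * (p l).eval (lam i) = if k = l then 1 else 0) :
    ∀ m : ℕ, m ≤ n → ∀ f : Polynomial ℝ, f.degree < m →
      f = ∑ k ∈ range m, C (∑ i, q i ^ 2 * f.eval (lam i) * (p k).eval (lam i)) * p k := by
  intro m
  induction m with
  | zero =>
    intro _ f hf
    simp only [Nat.cast_zero] at hf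
    have : f = 0 := by
      by_contra h
      exact absurd hf (by simp [degree_eq_bot.not.mpr h, Nat.WithBot.lt_zero_iff, degree_eq_bot, h])
    simp [this]
  | succ m ih =>
    intro hmn f hf
    have hmn' : m ≤ n := le_of_lt hmn
    have hm_lt_n : m < n := hmn
    have hpm0 : (p m).coeff m ≠ 0 := by
      have hnd : (p m).natDegree = m := natDegree_eq_of_degree_eq_some (hdeg m)
      have hp0 : p m ≠ 0 := by
        intro h
        have := hdeg m
        rw [h, degree_zero] at this
        exact absurd this (by simp)
      have : (p m).coeff m = (p m).leadingCoeff := by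
        simp [leadingCoeff, hnd]
      rw [this]
      exact leadingCoeff_ne_zero.mpr hp0
    set c : ℝ := f.coeff m / (p m).coeff m with hc
    set g : Polynomial ℝ := f - C c * p m with hg
    have hfg : f = g + C c * p m := by ring
    have hgdeg : g.degree < m := by
      rw [degree_lt_iff_coeff_zero]
      intro j hj
      have hfd : f.degree ≤ m := by
        exact_mod_cast Order.lt_succ_iff.mp (by exact_mod_cast hf)
      have hpd : (p m).degree ≤ m := le_of_eq (hdeg m)
      rcases eq_or_lt_of_le hj with rfl | hj'
      · simp only [hg, coeff_sub, coeff_C_mul]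
        rw [hc, div_mul_cancel₀ _ hpm0, sub_self]
      · have h1 : f.coeff j = 0 := coeff_eq_zero_of_degree_lt (lt_of_le_of_lt hfd (by exact_mod_cast hj'))
        have h2 : (p m).coeff j = 0 := coeff_eq_zero_of_degree_lt (lt_of_le_of_lt hpd (by exact_mod_cast hj'))
        simp [hg, h1, h2]
    have hIH := ih hmn' g hgdeg
    -- gamma linearity
    have hγ : ∀ k, k < n → (∑ i, q i ^ 2 * f.eval (lam i) * (p k).eval (lam i))
        = (∑ i, q i ^ 2 * g.eval (lam i) * (p k).eval (lam i)) + c * (if m = k then 1 else 0) := by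
      intro k hk
      rw [← horth m k hm_lt_n hk, Finset.mul_sum, ← Finset.sum_add_distrib]
      refine Finset.sum_congr rfl fun i _ => ?_
      have : f.eval (lam i) = g.eval (lam i) + c * (p m).eval (lam i) := by
        rw [hfg]; simp
      rw [this]; ring
    have hγg0 : (∑ i, q i ^ 2 * g.eval (lam i) * (p m).eval (lam i)) = 0 := by
      have heval : ∀ i, g.eval (lam i)
          = ∑ k ∈ range m, (∑ j, q j ^ 2 * g.eval (lam j) * (p k).eval (lam j)) * (p k).eval (lam i) := by
        intro i
        conv_lhs => rw [hIH]
        simp [eval_finset_sum]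
      calc (∑ i, q i ^ 2 * g.eval (lam i) * (p m).eval (lam i))
          = ∑ i, ∑ k ∈ range m, (∑ j, q j ^ 2 * g.eval (lam j) * (p k).eval (lam j))
              * (q i ^ 2 * (p k).eval (lam i) * (p m).eval (lam i)) := by
            refine Finset.sum_congr rfl fun i _ => ?_
            rw [heval i, Finset.mul_sum, Finset.sum_mul]
            refine Finset.sum_congr rfl fun k _ => by ring
        _ = ∑ k ∈ range m, (∑ j, q j ^ 2 * g.eval (lam j) * (p k).eval (lam j))
              * (∑ i, q i ^ 2 * (p k).eval (lam i) * (p m).eval (lam i)) := by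
            rw [Finset.sum_comm]
            exact Finset.sum_congr rfl fun k _ => by rw [Finset.mul_sum]
        _ = 0 := by
            apply Finset.sum_eq_zero
            intro k hk
            rw [horth k m (lt_of_lt_of_le (mem_range.mp hk) hmn') hm_lt_n,
              if_neg (Nat.ne_of_lt (mem_range.mp hk)), mul_zero]
    rw [Finset.sum_range_succ]
    have h1 : ∀ k ∈ range m, C (∑ i, q i ^ 2 * f.eval (lam i) * (p k).eval (lam i)) * p k
        = C (∑ i, q i ^ 2 * g.eval (lam i) * (p k).eval (lam i)) * p k := by
      intro k hk
      rw [hγ k (lt_of_lt_of_le (mem_range.mp hk) hmn'), if_neg (Nat.ne_of_gt (mem_range.mp hk))]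
      ring_nf
    rw [Finset.sum_congr rfl h1, ← hIH, hγ m hm_lt_n, if_pos rfl, hγg0]
    rw [hfg]; ring_nf


lemma deg_p (a b : ℕ → ℝ) (p : ℕ → Polynomial ℝ)
    (hpos : ∀ k, 1 ≤ k → 0 < a k)
    (h0 : p 0 = 1)
    (hbase : (X : Polynomial ℝ) * p 0 = C (a 1) * p 1 + C (b 1) * p 0)
    (hrec : ∀ k : ℕ, (X : Polynomial ℝ) * p (k + 1) =
      C (a (k + 2)) * p (k + 2) + C (b (k + 2)) * p (k + 1) + C (a (k + 1)) * p k) :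
    ∀ k, (p k).degree = k := by
  have key : ∀ k, (p k).degree = k ∧ (p (k + 1)).degree = (k + 1 : ℕ) := by
    intro k
    induction k with
    | zero =>
      constructor
      · rw [h0, degree_one]; rfl
      · have h1 : C (a 1) * p 1 = X - C (b 1) := by
          rw [h0, mul_one] at hbase
          linear_combination -hbase
        have hd : (C (a 1) * p 1).degree = 1 := by rw [h1, degree_X_sub_C]
        rw [degree_mul, degree_C (ne_of_gt (hpos 1 le_rfl))] at hd
        rw [zero_add] at hd
        exact_mod_cast hd
    | succ k ih =>
      obtain ⟨ihk, ihk1⟩ := ih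
      refine ⟨ihk1, ?_⟩
      have h1 : C (a (k + 2)) * p (k + 2)
          = X * p (k + 1) - (C (b (k + 2)) * p (k + 1) + C (a (k + 1)) * p k) := by
        linear_combination -(hrec k)
      have hd1 : (X * p (k + 1)).degree = ((k + 2 : ℕ) : WithBot ℕ) := by
        rw [degree_mul, degree_X, ihk1]
        norm_cast
        omega
      have hb1 : (C (b (k + 2)) * p (k + 1)).degree ≤ ((k + 1 : ℕ) : WithBot ℕ) := by
        refine le_trans (degree_mul_le _ _) ?_
        rw [ihk1]
        calc (C (b (k + 2))).degree + ((k + 1 : ℕ) : WithBot ℕ)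
            ≤ 0 + ((k + 1 : ℕ) : WithBot ℕ) := add_le_add_left degree_C_le _
          _ = _ := zero_add _
      have ha1 : (C (a (k + 1)) * p k).degree ≤ ((k : ℕ) : WithBot ℕ) := by
        refine le_trans (degree_mul_le _ _) ?_
        rw [ihk]
        calc (C (a (k + 1))).degree + ((k : ℕ) : WithBot ℕ)
            ≤ 0 + ((k : ℕ) : WithBot ℕ) := add_le_add_left degree_C_le _
          _ = _ := zero_add _
      have hd2 : (C (b (k + 2)) * p (k + 1) + C (a (k + 1)) * p k).degree
          < ((k + 2 : ℕ) : WithBot ℕ) := by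
        apply lt_of_le_of_lt (degree_add_le _ _)
        apply max_lt
        · exact lt_of_le_of_lt hb1 (by exact_mod_cast (by omega : k + 1 < k + 2))
        · exact lt_of_le_of_lt ha1 (by exact_mod_cast (by omega : k < k + 2))
      have hd : (C (a (k + 2)) * p (k + 2)).degree = ((k + 2 : ℕ) : WithBot ℕ) := by
        rw [h1, degree_sub_eq_left_of_degree_lt (by rw [hd1]; exact hd2), hd1]
      rw [degree_mul, degree_C (ne_of_gt (hpos (k + 2) (by omega))), zero_add] at hd
      exact_mod_cast hd
  intro k
  exact (key k).1

/-- Expansion of the difference quotient of `p_ℓ` in terms of minor polynomials,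
and the consequent formula for `p_ℓ'`. -/
theorem difference_quotient_expansion
    (n : ℕ)
    (a b : ℕ → ℝ) (p : ℕ → Polynomial ℝ)
    (hpos : ∀ k, 1 ≤ k → 0 < a k)
    (h0 : p 0 = 1)
    (hbase : (X : Polynomial ℝ) * p 0 = C (a 1) * p 1 + C (b 1) * p 0)
    (hrec : ∀ k : ℕ, (X : Polynomial ℝ) * p (k + 1) =
      C (a (k + 2)) * p (k + 2) + C (b (k + 2)) * p (k + 1) + C (a (k + 1)) * p k)
    (lam : Fin n → ℝ) (hl : Function.Injective lam)
    (q : Fin n → ℝ)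
    (horth : ∀ k l : ℕ, k < n → l < n →
      ∑ i, q i ^ 2 * (p k).eval (lam i) * (p l).eval (lam i) =
        if k = l then 1 else 0)
    (horth2 : ∀ i j : Fin n,
      q i * q j * ∑ m ∈ range n, (p m).eval (lam i) * (p m).eval (lam j) =
        if i = j then 1 else 0)
    (pm : ℕ → ℕ → Polynomial ℝ)
    (hpm : ∀ k l : ℕ, pm k l =
      ∑ i, C (q i ^ 2 * (p k).eval (lam i)) *
        ((p l - C ((p l).eval (lam i))) /ₘ (X - C (lam i))))
    (l : ℕ) (hln : l < n) :
    (∀ y : ℝ, (p l - C ((p l).eval y)) /ₘ (X - C y) =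
      ∑ k ∈ range l, C ((p k).eval y) * pm k l) ∧
    derivative (p l) = ∑ k ∈ range l, pm k l * p k := by
  have hdeg := deg_p a b p hpos h0 hbase hrec
  set D : ℝ → Polynomial ℝ := fun y => (p l - C ((p l).eval y)) /ₘ (X - C y) with hD
  have hexpand := expand_lemma n lam q p hdeg horth l (le_of_lt hln)
  have hDexp : ∀ y : ℝ, D y =
      ∑ k ∈ range l, C (∑ i, q i ^ 2 * (D y).eval (lam i) * (p k).eval (lam i)) * p k :=
    fun y => hexpand (D y) (dq_degree_lt _ _ _ (le_of_eq (hdeg l)))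
  set G : Fin n → ℕ → ℝ :=
    fun i k => ∑ j, q j ^ 2 * (D (lam i)).eval (lam j) * (p k).eval (lam j) with hG
  have hDi : ∀ i : Fin n, D (lam i) = ∑ k ∈ range l, C (G i k) * p k := fun i => hDexp (lam i)
  have hval : ∀ (y : ℝ) (i : Fin n),
      (D y).eval (lam i) = ∑ k ∈ range l, G i k * (p k).eval y := by
    intro y i
    have hs : (D y).eval (lam i) = (D (lam i)).eval y := dq_symm (p l) (lam i) y
    rw [hs]
    conv_lhs => rw [hDi i]
    simp [eval_finset_sum]
  have hE : ∀ i j : Fin n, (D (lam i)).eval (lam j) = (D (lam j)).eval (lam i) :=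
    fun i j => dq_symm (p l) (lam j) (lam i)
  have hpm' : ∀ k, pm k l = ∑ i, C (q i ^ 2 * (p k).eval (lam i)) * D (lam i) :=
    fun k => hpm k l
  have hcoef : ∀ (y : ℝ) (m : ℕ),
      (∑ i, q i ^ 2 * (∑ k ∈ range l, G i k * (p k).eval y) * (p m).eval (lam i))
        = ∑ k ∈ range l, ∑ i, (p k).eval y * (q i ^ 2 * (p k).eval (lam i)) * G i m := by
    intro y m
    calc (∑ i, q i ^ 2 * (∑ k ∈ range l, G i k * (p k).eval y) * (p m).eval (lam i))
        = ∑ i, ∑ k ∈ range l, ∑ j, (q i ^ 2 * (p m).eval (lam i)) * (q j ^ 2 * (p k).eval (lam j))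
            * (D (lam i)).eval (lam j) * (p k).eval y := by
          refine Finset.sum_congr rfl fun i _ => ?_
          rw [Finset.mul_sum, Finset.sum_mul]
          refine Finset.sum_congr rfl fun k _ => ?_
          rw [hG]
          simp only
          rw [Finset.sum_mul, Finset.mul_sum, Finset.sum_mul]
          refine Finset.sum_congr rfl fun j _ => by ring
      _ = ∑ k ∈ range l, ∑ i, ∑ j, (q i ^ 2 * (p m).eval (lam i)) * (q j ^ 2 * (p k).eval (lam j))
            * (D (lam i)).eval (lam j) * (p k).eval y := Finset.sum_comm
      _ = ∑ k ∈ range l, ∑ i, ∑ j, (q j ^ 2 * (p m).eval (lam j)) * (q i ^ 2 * (p k).eval (lam i))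
            * (D (lam i)).eval (lam j) * (p k).eval y := by
          refine Finset.sum_congr rfl fun k _ => ?_
          rw [Finset.sum_comm]
          refine Finset.sum_congr rfl fun i _ => Finset.sum_congr rfl fun j _ => ?_
          rw [hE i j]
      _ = ∑ k ∈ range l, ∑ i, (p k).eval y * (q i ^ 2 * (p k).eval (lam i)) * G i m := by
          refine Finset.sum_congr rfl fun k _ => Finset.sum_congr rfl fun i _ => ?_
          rw [hG]
          simp only
          rw [Finset.mul_sum]
          refine Finset.sum_congr rfl fun j _ => by ring
  have part1 : ∀ y : ℝ, D y = ∑ k ∈ range l, C ((p k).eval y) * pm k l := by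
    intro y
    refine (hDexp y).trans ?_
    have lhs_eq : ∑ k ∈ range l, C (∑ i, q i ^ 2 * (D y).eval (lam i) * (p k).eval (lam i)) * p k
        = ∑ m ∈ range l, C (∑ k ∈ range l, ∑ i,
            (p k).eval y * (q i ^ 2 * (p k).eval (lam i)) * G i m) * p m := by
      refine Finset.sum_congr rfl fun m _ => ?_
      rw [← hcoef y m]
      congr 1
      refine congrArg C (Finset.sum_congr rfl fun i _ => ?_)
      rw [hval y i]
    rw [lhs_eq]
    have rhs_eq : ∑ k ∈ range l, C ((p k).eval y) * pm k l
        = ∑ m ∈ range l, C (∑ k ∈ range l, ∑ i,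
            (p k).eval y * (q i ^ 2 * (p k).eval (lam i)) * G i m) * p m := by
      calc ∑ k ∈ range l, C ((p k).eval y) * pm k l
          = ∑ k ∈ range l, ∑ i, ∑ m ∈ range l,
              C ((p k).eval y * (q i ^ 2 * (p k).eval (lam i)) * G i m) * p m := by
            refine Finset.sum_congr rfl fun k _ => ?_
            rw [hpm' k, Finset.mul_sum]
            refine Finset.sum_congr rfl fun i _ => ?_
            rw [hDi i, Finset.mul_sum, Finset.mul_sum]
            refine Finset.sum_congr rfl fun m _ => ?_
            rw [← mul_assoc, ← mul_assoc, ← C_mul, ← C_mul]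
        _ = ∑ k ∈ range l, ∑ m ∈ range l, ∑ i,
              C ((p k).eval y * (q i ^ 2 * (p k).eval (lam i)) * G i m) * p m := by
            exact Finset.sum_congr rfl fun k _ => Finset.sum_comm
        _ = ∑ m ∈ range l, ∑ k ∈ range l, ∑ i,
              C ((p k).eval y * (q i ^ 2 * (p k).eval (lam i)) * G i m) * p m :=
            Finset.sum_comm
        _ = ∑ m ∈ range l, C (∑ k ∈ range l, ∑ i,
              (p k).eval y * (q i ^ 2 * (p k).eval (lam i)) * G i m) * p m := by
            refine Finset.sum_congr rfl fun m _ => ?_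
            rw [map_sum, Finset.sum_mul]
            refine Finset.sum_congr rfl fun k _ => ?_
            rw [map_sum, Finset.sum_mul]
    rw [rhs_eq]
  refine ⟨part1, ?_⟩
  apply Polynomial.funext
  intro y
  have h := congrArg (eval y) (part1 y)
  have hself : (D y).eval y = (derivative (p l)).eval y := dq_eval_self (p l) y
  rw [hself] at h
  rw [h]
  rw [eval_finset_sum, eval_finset_sum]
  refine Finset.sum_congr rfl fun k _ => ?_
  simp [mul_comm]
end

section
/- Mixed Christoffel–Darboux formula: for the orthogonal polynomials $\{p_k\}$ and minor polynomials $\{p_k^{(r)}\}$ of a Jacobi matrix, and any $r < \ell$, $\sum_{k=1}^{\ell} p_{k-1}(x)\,p_{k-1}^{(r)}(y)\,(x-y) = a_\ell\big(p_\ell(x)p_{\ell-1}^{(r)}(y) - p_{\ell-1}(x)p_\ell^{(r)}(y)\big) + p_r(x)$. -/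
open Polynomial Finset

/-- Mixed Christoffel–Darboux formula for orthogonal polynomials and minor polynomials. -/
theorem mixed_christoffel_darboux
    (a b : ℕ → ℝ) (p pr : ℕ → Polynomial ℝ) (r : ℕ)
    (hpos : ∀ k, 1 ≤ k → 0 < a k)
    (h0 : p 0 = 1)
    (hbase : (X : Polynomial ℝ) * p 0 = C (a 1) * p 1 + C (b 1) * p 0)
    (hrec : ∀ k : ℕ, (X : Polynomial ℝ) * p (k + 1) =
      C (a (k + 2)) * p (k + 2) + C (b (k + 2)) * p (k + 1) + C (a (k + 1)) * p k)
    (hvan : ∀ k, k ≤ r → pr k = 0)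
    (hinit : pr (r + 1) = C (1 / a (r + 1)))
    (hprbase : (X : Polynomial ℝ) * pr 0 =
      C (a 1) * pr 1 + C (b 1) * pr 0 - (if r = 0 then 1 else 0))
    (hprrec : ∀ k : ℕ, (X : Polynomial ℝ) * pr (k + 1) =
      C (a (k + 2)) * pr (k + 2) + C (b (k + 2)) * pr (k + 1) + C (a (k + 1)) * pr k -
        (if r = k + 1 then 1 else 0))
    (l : ℕ) (hrl : r < l) (x y : ℝ) :
    ∑ k ∈ range l, (p k).eval x * (pr k).eval y * (x - y) =
      a l * ((p l).eval x * (pr (l - 1)).eval y - (p (l - 1)).eval x * (pr l).eval y) +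
        (p r).eval x := by
  induction l, hrl using Nat.le_induction with
  | base =>
    have ha : a (r + 1) ≠ 0 := ne_of_gt (hpos (r + 1) (by omega))
    have hsum : ∑ k ∈ range (r + 1), (p k).eval x * (pr k).eval y * (x - y) = 0 := by
      apply Finset.sum_eq_zero
      intro k hk
      rw [hvan k (by simpa [Nat.lt_succ_iff] using hk)]
      simp
    rw [hsum, hinit]
    simp only [Nat.succ_sub_one, hvan r le_rfl]
    simp
    field_simp
    ring
  | succ n hn ih =>
    obtain ⟨m, rfl⟩ : ∃ m, n = m + 1 := ⟨n - 1, by omega⟩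
    have hx := congrArg (Polynomial.eval x) (hrec m)
    have hy := congrArg (Polynomial.eval y) (hprrec m)
    rw [if_neg (by omega : ¬ r = m + 1)] at hy
    simp only [eval_mul, eval_add, eval_sub, eval_C, eval_X, eval_zero] at hx hy
    rw [Finset.sum_range_succ, ih]
    simp only [Nat.add_sub_cancel]
    linear_combination (Polynomial.eval y (pr (m + 1))) * hx -
      (Polynomial.eval x (p (m + 1))) * hy
end

section
/- Dual recurrence in the superscript: for $0 \leq j < \ell$, $x\, p_\ell^{(j)}(x) = a_{j+1} p_\ell^{(j+1)}(x) + b_{j+1} p_\ell^{(j)}(x) + a_j p_\ell^{(j-1)}(x)$, where one takes $a_0 = 1$ and $p_\ell^{(-1)}(x) := p_\ell(x)$. -/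
open Polynomial Finset

/-- Dual recurrence for the minor polynomials in the superscript: for `0 ≤ j < ℓ`,
`x p_ℓ^{(j)} = a_{j+1} p_ℓ^{(j+1)} + b_{j+1} p_ℓ^{(j)} + a_j p_ℓ^{(j-1)}`, with the
conventions `a_0 = 1` and `p_ℓ^{(-1)} = p_ℓ`. -/
theorem minor_dual_recurrence
    (a b : ℕ → ℝ) (p : ℕ → Polynomial ℝ) (pm : ℕ → ℕ → Polynomial ℝ)
    (hpos : ∀ k, 1 ≤ k → 0 < a k)
    (ha0 : a 0 = 1)
    (h0 : p 0 = 1)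
    (hbase : (X : Polynomial ℝ) * p 0 = C (a 1) * p 1 + C (b 1) * p 0)
    (hrec : ∀ k : ℕ, (X : Polynomial ℝ) * p (k + 1) =
      C (a (k + 2)) * p (k + 2) + C (b (k + 2)) * p (k + 1) + C (a (k + 1)) * p k)
    (hvan : ∀ r k, k ≤ r → pm r k = 0)
    (hpmbase : ∀ r, (X : Polynomial ℝ) * pm r 0 =
      C (a 1) * pm r 1 + C (b 1) * pm r 0 - (if r = 0 then 1 else 0))
    (hpmrec : ∀ r k : ℕ, (X : Polynomial ℝ) * pm r (k + 1) =
      C (a (k + 2)) * pm r (k + 2) + C (b (k + 2)) * pm r (k + 1) +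
        C (a (k + 1)) * pm r k - (if r = k + 1 then 1 else 0))
    (j l : ℕ) (hjl : j < l) :
    (X : Polynomial ℝ) * pm j l =
      C (a (j + 1)) * pm (j + 1) l + C (b (j + 1)) * pm j l +
        C (a j) * (if j = 0 then p l else pm (j - 1) l) := by
  have hC : ∀ k : ℕ, (C (a (k + 1)) : Polynomial ℝ) ≠ 0 := by
    intro k
    simpa using (hpos (k + 1) (Nat.le_add_left 1 k)).ne'
  have hpm00 : pm 0 0 = 0 := hvan 0 0 le_rfl
  -- `C (a 1) * pm 0 1 = 1`
  have h1 : C (a 1) * pm 0 1 = 1 := by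
    have hb := hpmbase 0
    rw [hpm00, if_pos rfl] at hb
    linear_combination -hb
  -- Wronskian identity
  have hW : ∀ m : ℕ, C (a (m + 1)) * (p m * pm 0 (m + 1) - p (m + 1) * pm 0 m) = 1 := by
    intro m
    induction m with
    | zero =>
      rw [h0, hpm00]
      linear_combination h1
    | succ m ih =>
      have e1 := hpmrec 0 m
      have e2 := hrec m
      simp only [show (0 : ℕ) ≠ m + 1 from (Nat.succ_ne_zero m).symm, if_false, sub_zero] at e1
      linear_combination pm 0 (m + 1) * e2 - p (m + 1) * e1 + ih
  -- closed form for the minors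
  have hB : ∀ l : ℕ, ∀ j : ℕ, j ≤ l → pm j l = p j * pm 0 l - p l * pm 0 j := by
    intro l
    induction l using Nat.strong_induction_on with
    | _ l ih =>
      intro j hj
      rcases Nat.eq_zero_or_pos j with rfl | hj0
      · rw [h0, hpm00]; ring
      rcases hj.eq_or_lt with rfl | hjlt
      · rw [hvan j j le_rfl]; ring
      -- j < l, j ≥ 1 hence l ≥ 2
      obtain ⟨m, rfl⟩ : ∃ m, l = m + 2 := by
        refine ⟨l - 2, ?_⟩
        omega
      rcases (Nat.lt_succ_iff.mp hjlt).eq_or_lt with h' | hlt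
      · -- j = m + 1 : use the Wronskian
        subst h'
        have e := hpmrec (m + 1) m
        simp only [if_pos rfl, if_true, hvan (m + 1) (m + 1) le_rfl,
          hvan (m + 1) m (Nat.le_succ m), mul_zero] at e
        have hkey : C (a (m + 2)) * pm (m + 1) (m + 2) = 1 := by linear_combination -e
        refine mul_left_cancel₀ (hC (m + 1)) ?_
        rw [hkey, hW (m + 1)]
      · -- j ≤ m
        have hjm : j ≤ m := Nat.lt_succ_iff.mp hlt
        have e := hpmrec j m
        simp only [show j ≠ m + 1 from Nat.ne_of_lt hlt, if_false, sub_zero] at e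
        have ih1 := ih (m + 1) (by omega) j (by omega)
        have ih2 := ih m (by omega) j hjm
        have e1 := hpmrec 0 m
        have e2 := hrec m
        simp only [show (0 : ℕ) ≠ m + 1 from (Nat.succ_ne_zero m).symm, if_false, sub_zero] at e1
        refine mul_left_cancel₀ (hC (m + 1)) ?_
        linear_combination (-1 : Polynomial ℝ) * e + p j * e1 - pm 0 j * e2 +
          (X - C (b (m + 2))) * ih1 - C (a (m + 1)) * ih2
  -- finish
  have hb1 := hB l j hjl.le
  have hb2 := hB l (j + 1) hjl
  rcases Nat.eq_zero_or_pos j with rfl | hj0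
  · simp only [if_pos rfl, if_true, ha0, map_one, one_mul, zero_add]
    simp only [zero_add] at hb2
    rw [hb2]
    have hbase' := hbase
    rw [h0, mul_one] at hbase'
    linear_combination pm 0 l * hbase' + p l * h1
  · obtain ⟨m, rfl⟩ : ∃ m, j = m + 1 := ⟨j - 1, by omega⟩
    simp only [if_neg (Nat.succ_ne_zero m), Nat.add_sub_cancel]
    have hb3 := hB l m (by omega)
    have e1 := hpmrec 0 m
    have e2 := hrec m
    simp only [show (0 : ℕ) ≠ m + 1 from (Nat.succ_ne_zero m).symm, if_false, sub_zero] at e1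
    rw [hb1, hb2, hb3]
    linear_combination pm 0 l * e2 - p l * e1
end

section
/- Perturbation formula for orthogonal polynomials: let $\{p_\ell\}$ be orthogonal polynomials with coefficients $(a_k,b_k)$ and minor polynomials $p_\ell^{(j)}$, and let $\{\hat p_j\}$ satisfy $x\hat p_j = \hat a_{j+1}\hat p_{j+1} + \hat b_{j+1}\hat p_j + \hat a_j \hat p_{j-1}$ (with $\hat p_{-1}=0$). Then $\frac{\hat a_\ell}{a_\ell}\hat p_\ell(x) = p_\ell(x)\hat p_0(x) + \sum_{j=1}^{\ell}(b_j - \hat b_j) p_\ell^{(j-1)}(x)\hat p_{j-1}(x) + \sum_{j=1}^{\ell-1}(a_j - \hat a_j)\big(p_\ell^{(j)}(x)\hat p_{j-1}(x) + p_\ell^{(j-1)}(x)\hat p_j(x)\big)$. -/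
open Polynomial Finset

/-- Perturbation formula comparing two families of orthogonal polynomials via minor
polynomials. -/
theorem orthogonal_polynomial_perturbation
    (a b ah bh : ℕ → ℝ) (p ph : ℕ → Polynomial ℝ) (pm : ℕ → ℕ → Polynomial ℝ)
    (hpos : ∀ k, 1 ≤ k → 0 < a k)
    (h0 : p 0 = 1)
    (hbase : (X : Polynomial ℝ) * p 0 = C (a 1) * p 1 + C (b 1) * p 0)
    (hrec : ∀ k : ℕ, (X : Polynomial ℝ) * p (k + 1) =
      C (a (k + 2)) * p (k + 2) + C (b (k + 2)) * p (k + 1) + C (a (k + 1)) * p k)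
    (hvan : ∀ r k, k ≤ r → pm r k = 0)
    (hpmbase : ∀ r, (X : Polynomial ℝ) * pm r 0 =
      C (a 1) * pm r 1 + C (b 1) * pm r 0 - (if r = 0 then 1 else 0))
    (hpmrec : ∀ r k : ℕ, (X : Polynomial ℝ) * pm r (k + 1) =
      C (a (k + 2)) * pm r (k + 2) + C (b (k + 2)) * pm r (k + 1) +
        C (a (k + 1)) * pm r k - (if r = k + 1 then 1 else 0))
    (hhbase : (X : Polynomial ℝ) * ph 0 = C (ah 1) * ph 1 + C (bh 1) * ph 0)
    (hhrec : ∀ k : ℕ, (X : Polynomial ℝ) * ph (k + 1) =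
      C (ah (k + 2)) * ph (k + 2) + C (bh (k + 2)) * ph (k + 1) + C (ah (k + 1)) * ph k)
    (l : ℕ) (hl : 1 ≤ l) :
    C (ah l / a l) * ph l =
      p l * ph 0 +
      (∑ j ∈ range l, C (b (j + 1) - bh (j + 1)) * pm j l * ph j) +
      (∑ j ∈ range (l - 1), C (a (j + 1) - ah (j + 1)) *
        (pm (j + 1) l * ph j + pm j l * ph (j + 1))) := by
  have ha : ∀ k : ℕ, (C (a (k + 1)) : Polynomial ℝ) ≠ 0 := fun k => by
    simpa using (hpos (k + 1) (by omega)).ne'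
  have hA : ∀ r, C (a (r + 1)) * pm r (r + 1) = 1 := by
    intro r
    cases r with
    | zero =>
      have h := hpmbase 0
      rw [hvan 0 0 le_rfl] at h
      rw [if_pos rfl] at h
      linear_combination -h
    | succ n =>
      have h := hpmrec (n + 1) n
      rw [hvan (n + 1) (n + 1) le_rfl, hvan (n + 1) n (by omega)] at h
      rw [if_pos rfl] at h
      linear_combination -h
  have key : ∀ m j : ℕ, C (a (m + 2)) * pm j (m + 2) =
      X * pm j (m + 1) - C (b (m + 2)) * pm j (m + 1) - C (a (m + 1)) * pm j m +
        (if j = m + 1 then 1 else 0) := by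
    intro m j
    linear_combination -hpmrec j m
  have hQ : ∀ n : ℕ,
      (p n * ph 0 + (∑ j ∈ range n, C (b (j + 1) - bh (j + 1)) * pm j n * ph j) +
        (∑ j ∈ range n, C (a (j + 1) - ah (j + 1)) *
          (pm (j + 1) n * ph j + pm j n * ph (j + 1))) = ph n) ∧
      (p (n + 1) * ph 0 +
        (∑ j ∈ range (n + 1), C (b (j + 1) - bh (j + 1)) * pm j (n + 1) * ph j) +
        (∑ j ∈ range (n + 1), C (a (j + 1) - ah (j + 1)) *
          (pm (j + 1) (n + 1) * ph j + pm j (n + 1) * ph (j + 1))) = ph (n + 1)) := by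
    intro n
    induction n with
    | zero =>
      constructor
      · simp [h0]
      · refine mul_left_cancel₀ (ha 0) ?_
        rw [Finset.sum_range_one, Finset.sum_range_one, hvan 1 1 le_rfl]
        simp only [map_sub]
        linear_combination (-(ph 0)) * hbase + ((X - C (b 1)) * ph 0) * h0 + hhbase +
          ((C (b 1) - C (bh 1)) * ph 0 + (C (a 1) - C (ah 1)) * ph 1) * hA 0
    | succ m ih =>
      obtain ⟨Qm, Qm1⟩ := ih
      refine ⟨Qm1, ?_⟩
      show p (m + 2) * ph 0 +
        (∑ j ∈ range (m + 2), C (b (j + 1) - bh (j + 1)) * pm j (m + 2) * ph j) +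
        (∑ j ∈ range (m + 2), C (a (j + 1) - ah (j + 1)) *
          (pm (j + 1) (m + 2) * ph j + pm j (m + 2) * ph (j + 1))) = ph (m + 2)
      have t1 : (∑ j ∈ range (m + 2), C (b (j + 1) - bh (j + 1)) * pm j (m + 1) * ph j)
          = ∑ j ∈ range (m + 1), C (b (j + 1) - bh (j + 1)) * pm j (m + 1) * ph j := by
        rw [Finset.sum_range_succ, hvan (m + 1) (m + 1) le_rfl]
        simp
      have t2 : (∑ j ∈ range (m + 2), C (b (j + 1) - bh (j + 1)) * pm j m * ph j)
          = ∑ j ∈ range m, C (b (j + 1) - bh (j + 1)) * pm j m * ph j := by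
        rw [Finset.sum_range_succ, Finset.sum_range_succ, hvan (m + 1) m (by omega),
          hvan m m le_rfl]
        simp
      have u1 : (∑ j ∈ range (m + 1), C (a (j + 1) - ah (j + 1)) *
            (pm (j + 1) m * ph j + pm j m * ph (j + 1)))
          = ∑ j ∈ range m, C (a (j + 1) - ah (j + 1)) *
            (pm (j + 1) m * ph j + pm j m * ph (j + 1)) := by
        rw [Finset.sum_range_succ, hvan (m + 1) m (by omega), hvan m m le_rfl]
        simp
      have hSβ : C (a (m + 2)) *
            (∑ j ∈ range (m + 2), C (b (j + 1) - bh (j + 1)) * pm j (m + 2) * ph j)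
          = X * (∑ j ∈ range (m + 1), C (b (j + 1) - bh (j + 1)) * pm j (m + 1) * ph j)
            - C (b (m + 2)) *
              (∑ j ∈ range (m + 1), C (b (j + 1) - bh (j + 1)) * pm j (m + 1) * ph j)
            - C (a (m + 1)) * (∑ j ∈ range m, C (b (j + 1) - bh (j + 1)) * pm j m * ph j)
            + C (b (m + 2) - bh (m + 2)) * ph (m + 1) := by
        calc C (a (m + 2)) *
              (∑ j ∈ range (m + 2), C (b (j + 1) - bh (j + 1)) * pm j (m + 2) * ph j)
            = ∑ j ∈ range (m + 2),
                (X * (C (b (j + 1) - bh (j + 1)) * pm j (m + 1) * ph j)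
                 - C (b (m + 2)) * (C (b (j + 1) - bh (j + 1)) * pm j (m + 1) * ph j)
                 - C (a (m + 1)) * (C (b (j + 1) - bh (j + 1)) * pm j m * ph j)
                 + (if j = m + 1 then C (b (j + 1) - bh (j + 1)) * ph j else 0)) := by
              rw [Finset.mul_sum]
              refine Finset.sum_congr rfl fun j _ => ?_
              have k := key m j
              split_ifs at k ⊢ with h <;>
                linear_combination (C (b (j + 1) - bh (j + 1)) * ph j) * k
          _ = _ := by
              rw [Finset.sum_add_distrib, Finset.sum_sub_distrib, Finset.sum_sub_distrib,
                ← Finset.mul_sum, ← Finset.mul_sum, ← Finset.mul_sum, t1, t2,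
                Finset.sum_ite_eq' (range (m + 2)) (m + 1)
                  (fun j => C (b (j + 1) - bh (j + 1)) * ph j)]
              simp
      have hSα : C (a (m + 2)) *
            (∑ j ∈ range (m + 1), C (a (j + 1) - ah (j + 1)) *
              (pm (j + 1) (m + 2) * ph j + pm j (m + 2) * ph (j + 1)))
          = X * (∑ j ∈ range (m + 1), C (a (j + 1) - ah (j + 1)) *
              (pm (j + 1) (m + 1) * ph j + pm j (m + 1) * ph (j + 1)))
            - C (b (m + 2)) * (∑ j ∈ range (m + 1), C (a (j + 1) - ah (j + 1)) *
              (pm (j + 1) (m + 1) * ph j + pm j (m + 1) * ph (j + 1)))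
            - C (a (m + 1)) * (∑ j ∈ range m, C (a (j + 1) - ah (j + 1)) *
              (pm (j + 1) m * ph j + pm j m * ph (j + 1)))
            + C (a (m + 1) - ah (m + 1)) * ph m := by
        calc C (a (m + 2)) *
              (∑ j ∈ range (m + 1), C (a (j + 1) - ah (j + 1)) *
                (pm (j + 1) (m + 2) * ph j + pm j (m + 2) * ph (j + 1)))
            = ∑ j ∈ range (m + 1),
                (X * (C (a (j + 1) - ah (j + 1)) *
                    (pm (j + 1) (m + 1) * ph j + pm j (m + 1) * ph (j + 1)))
                 - C (b (m + 2)) * (C (a (j + 1) - ah (j + 1)) *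
                    (pm (j + 1) (m + 1) * ph j + pm j (m + 1) * ph (j + 1)))
                 - C (a (m + 1)) * (C (a (j + 1) - ah (j + 1)) *
                    (pm (j + 1) m * ph j + pm j m * ph (j + 1)))
                 + (if j = m then C (a (j + 1) - ah (j + 1)) * ph j else 0)) := by
              rw [Finset.mul_sum]
              refine Finset.sum_congr rfl fun j hj => ?_
              have hj' : j ≠ m + 1 := by
                have := Finset.mem_range.mp hj; omega
              have k1 := key m (j + 1)
              have k2 := key m j
              rw [if_neg hj'] at k2
              simp only [add_left_inj] at k1
              split_ifs at k1 ⊢ with h <;>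
                linear_combination (C (a (j + 1) - ah (j + 1)) * ph j) * k1 +
                  (C (a (j + 1) - ah (j + 1)) * ph (j + 1)) * k2
          _ = _ := by
              rw [Finset.sum_add_distrib, Finset.sum_sub_distrib, Finset.sum_sub_distrib,
                ← Finset.mul_sum, ← Finset.mul_sum, ← Finset.mul_sum, u1,
                Finset.sum_ite_eq' (range (m + 1)) m
                  (fun j => C (a (j + 1) - ah (j + 1)) * ph j)]
              simp
      have hP : C (a (m + 2)) * p (m + 2)
          = X * p (m + 1) - C (b (m + 2)) * p (m + 1) - C (a (m + 1)) * p m := by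
        linear_combination -hrec m
      have hpeel : (∑ j ∈ range (m + 2), C (a (j + 1) - ah (j + 1)) *
            (pm (j + 1) (m + 2) * ph j + pm j (m + 2) * ph (j + 1)))
          = (∑ j ∈ range (m + 1), C (a (j + 1) - ah (j + 1)) *
            (pm (j + 1) (m + 2) * ph j + pm j (m + 2) * ph (j + 1)))
            + C (a (m + 2) - ah (m + 2)) * (pm (m + 1) (m + 2) * ph (m + 2)) := by
        rw [Finset.sum_range_succ, hvan (m + 2) (m + 2) le_rfl]
        ring
      have hc1 : (C (b (m + 2) - bh (m + 2)) : Polynomial ℝ)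
          = C (b (m + 2)) - C (bh (m + 2)) := map_sub _ _ _
      have hc2 : (C (a (m + 1) - ah (m + 1)) : Polynomial ℝ)
          = C (a (m + 1)) - C (ah (m + 1)) := map_sub _ _ _
      have hc3 : (C (a (m + 2) - ah (m + 2)) : Polynomial ℝ)
          = C (a (m + 2)) - C (ah (m + 2)) := map_sub _ _ _
      refine mul_left_cancel₀ (ha (m + 1)) ?_
      linear_combination (ph 0) * hP + hSβ + hSα + C (a (m + 2)) * hpeel +
        (C (a (m + 2) - ah (m + 2)) * ph (m + 2)) * hA (m + 1) +
        (X - C (b (m + 2))) * Qm1 - C (a (m + 1)) * Qm + hhrec m +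
        ph (m + 1) * hc1 + ph m * hc2 + ph (m + 2) * hc3
  -- conclude
  obtain ⟨n, rfl⟩ : ∃ n, l = n + 1 := ⟨l - 1, by omega⟩
  have Q := (hQ n).2
  have Qp : (∑ j ∈ range (n + 1), C (a (j + 1) - ah (j + 1)) *
        (pm (j + 1) (n + 1) * ph j + pm j (n + 1) * ph (j + 1)))
      = (∑ j ∈ range n, C (a (j + 1) - ah (j + 1)) *
        (pm (j + 1) (n + 1) * ph j + pm j (n + 1) * ph (j + 1)))
        + C (a (n + 1) - ah (n + 1)) * (pm n (n + 1) * ph (n + 1)) := by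
    rw [Finset.sum_range_succ, hvan (n + 1) (n + 1) le_rfl]
    ring
  have hc : (C (a (n + 1) - ah (n + 1)) : Polynomial ℝ)
      = C (a (n + 1)) - C (ah (n + 1)) := map_sub _ _ _
  have hd : (C (ah (n + 1) / a (n + 1)) : Polynomial ℝ) * C (a (n + 1)) = C (ah (n + 1)) := by
    rw [← C_mul, div_mul_cancel₀]
    exact (hpos (n + 1) (by omega)).ne'
  refine mul_left_cancel₀ (ha n) ?_
  rw [Nat.add_sub_cancel]
  linear_combination ph (n + 1) * hd - C (a (n + 1)) * Q + C (a (n + 1)) * Qp +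
    (C (a (n + 1) - ah (n + 1)) * ph (n + 1)) * hA n + ph (n + 1) * hc
end

section
/- Let $A$ be an $n\times n$ Jacobi matrix with orthogonal polynomials $p_k$ and define for $k\geq\ell$ the matrix $E^-(x,y)$ with entries $p_{k-1}(x)p_{\ell-1}(y)$ below the diagonal, $0$ on the diagonal, antisymmetrized. Then for $1 < k < n$, $\ell + 1 < k$, the commutator satisfies $[A, E^-(x,y)]_{k,\ell} = (x-y)\,p_{k-1}(x)p_{\ell-1}(y)$. -/
open Polynomial Finset

/-- In the bulk of the matrix, the commutator of the Jacobi matrix `A` with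
`E⁻(x,y)` is `(x-y) p_{k-1}(x) p_{ℓ-1}(y)` (0-based: `(x-y) p_k(x) p_ℓ(y)`). -/
theorem commutator_Eminus_bulk
    (n : ℕ)
    (a b : ℕ → ℝ) (p : ℕ → Polynomial ℝ)
    (A : Matrix (Fin n) (Fin n) ℝ)
    (hA : ∀ i j : Fin n, A i j =
      if (i : ℕ) = (j : ℕ) then b ((i : ℕ) + 1)
      else if (i : ℕ) + 1 = (j : ℕ) then a ((i : ℕ) + 1)
      else if (j : ℕ) + 1 = (i : ℕ) then a ((j : ℕ) + 1)
      else 0)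
    (hpos : ∀ k, 1 ≤ k → k < n → 0 < a k)
    (h0 : p 0 = 1)
    (hbase : (X : Polynomial ℝ) * p 0 = C (a 1) * p 1 + C (b 1) * p 0)
    (hrec : ∀ k : ℕ, (X : Polynomial ℝ) * p (k + 1) =
      C (a (k + 2)) * p (k + 2) + C (b (k + 2)) * p (k + 1) + C (a (k + 1)) * p k)
    (Em : ℝ → ℝ → Matrix (Fin n) (Fin n) ℝ)
    (hEm : ∀ (x y : ℝ) (k l : Fin n), Em x y k l =
      ((if (l : ℕ) < (k : ℕ) then (p (k : ℕ)).eval x * (p (l : ℕ)).eval y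
        else if (k : ℕ) = (l : ℕ) then
          (1 / 2) * ((p (k : ℕ)).eval x * (p (k : ℕ)).eval y)
        else 0) -
       (if (k : ℕ) < (l : ℕ) then (p (l : ℕ)).eval x * (p (k : ℕ)).eval y
        else if (k : ℕ) = (l : ℕ) then
          (1 / 2) * ((p (l : ℕ)).eval x * (p (l : ℕ)).eval y)
        else 0)))
    (x y : ℝ) (k l : Fin n)
    (hk1 : 0 < (k : ℕ)) (hkn : (k : ℕ) < n - 1) (hlk : (l : ℕ) + 1 < (k : ℕ)) :
    (A * Em x y - Em x y * A) k l =
      (x - y) * (p (k : ℕ)).eval x * (p (l : ℕ)).eval y := by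
  have hmul : (A * Em x y - Em x y * A) k l =
      (∑ j, A k j * Em x y j l) - ∑ j, Em x y k j * A j l := by
    simp [Matrix.sub_apply, Matrix.mul_apply]
  rw [hmul]
  have hKn : (k : ℕ) < n := lt_of_lt_of_le hkn (Nat.sub_le n 1)
  have hK1n : (k : ℕ) + 1 < n := by omega
  have EV : ∀ (z : ℝ) (m : ℕ), 1 ≤ m →
      z * (p m).eval z = a (m+1) * (p (m+1)).eval z + b (m+1) * (p m).eval z
        + a m * (p (m-1)).eval z := by
    intro z m hm
    obtain ⟨m', rfl⟩ : ∃ m', m = m' + 1 := ⟨m - 1, by omega⟩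
    have h := congrArg (Polynomial.eval z) (hrec m')
    simp only [eval_mul, eval_add, eval_C, eval_X] at h
    simpa using h
  obtain ⟨km, hkmv⟩ : ∃ j : Fin n, (j : ℕ) = (k : ℕ) - 1 := ⟨⟨(k : ℕ) - 1, by omega⟩, rfl⟩
  obtain ⟨kp, hkpv⟩ : ∃ j : Fin n, (j : ℕ) = (k : ℕ) + 1 := ⟨⟨(k : ℕ) + 1, by omega⟩, rfl⟩
  obtain ⟨lp, hlpv⟩ : ∃ j : Fin n, (j : ℕ) = (l : ℕ) + 1 := ⟨⟨(l : ℕ) + 1, by omega⟩, rfl⟩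
  have h1 : (∑ j, A k j * Em x y j l) =
      A k km * Em x y km l + A k k * Em x y k l + A k kp * Em x y kp l := by
    have hz : ∀ j ∈ Finset.univ, j ∉ ({km, k, kp} : Finset (Fin n)) →
        A k j * Em x y j l = 0 := by
      intro j _ hj
      simp only [Finset.mem_insert, Finset.mem_singleton, Fin.ext_iff, hkmv, hkpv] at hj
      push_neg at hj
      rw [hA]
      rw [if_neg (by omega), if_neg (by omega), if_neg (by omega)]
      ring
    rw [← Finset.sum_subset (Finset.subset_univ _) hz]
    rw [Finset.sum_insert (by simp only [Finset.mem_insert, Finset.mem_singleton,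
          Fin.ext_iff, hkmv, hkpv]; omega),
        Finset.sum_insert (by simp only [Finset.mem_singleton, Fin.ext_iff, hkpv]; omega),
        Finset.sum_singleton]
    ring
  have eA1 : A k km = a (k : ℕ) := by
    rw [hA]; rw [if_neg (by omega), if_neg (by omega), if_pos (by omega)]
    rw [hkmv]; congr 1; omega
  have eA2 : A k k = b ((k : ℕ) + 1) := by rw [hA]; rw [if_pos rfl]
  have eA3 : A k kp = a ((k : ℕ) + 1) := by
    rw [hA]; rw [if_neg (by omega), if_pos (by omega)]
  have eE1 : Em x y km l = (p ((k : ℕ) - 1)).eval x * (p (l : ℕ)).eval y := by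
    rw [hEm]; rw [if_pos (by omega), if_neg (by omega), if_neg (by omega), hkmv]; ring
  have eE2 : Em x y k l = (p (k : ℕ)).eval x * (p (l : ℕ)).eval y := by
    rw [hEm]; rw [if_pos (by omega), if_neg (by omega), if_neg (by omega)]; ring
  have eE3 : Em x y kp l = (p ((k : ℕ) + 1)).eval x * (p (l : ℕ)).eval y := by
    rw [hEm]; rw [if_pos (by omega), if_neg (by omega), if_neg (by omega), hkpv]; ring
  have eE4 : Em x y k lp = (p (k : ℕ)).eval x * (p ((l : ℕ) + 1)).eval y := by
    rw [hEm]; rw [if_pos (by omega), if_neg (by omega), if_neg (by omega), hlpv]; ring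
  have eA4 : A lp l = a ((l : ℕ) + 1) := by
    rw [hA]; rw [if_neg (by omega), if_neg (by omega), if_pos (by omega)]
  have eA5 : A l l = b ((l : ℕ) + 1) := by rw [hA]; rw [if_pos rfl]
  have EX := EV x (k : ℕ) (by omega)
  rcases Nat.eq_zero_or_pos (l : ℕ) with hL0 | hL1
  · have h2 : (∑ j, Em x y k j * A j l) =
        Em x y k l * A l l + Em x y k lp * A lp l := by
      have hz : ∀ j ∈ Finset.univ, j ∉ ({l, lp} : Finset (Fin n)) →
          Em x y k j * A j l = 0 := by
        intro j _ hj
        simp only [Finset.mem_insert, Finset.mem_singleton, Fin.ext_iff, hlpv] at hj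
        push_neg at hj
        rw [hA]
        rw [if_neg (by omega), if_neg (by omega), if_neg (by omega)]
        ring
      rw [← Finset.sum_subset (Finset.subset_univ _) hz]
      rw [Finset.sum_insert (by simp only [Finset.mem_singleton, Fin.ext_iff, hlpv]; omega),
          Finset.sum_singleton]
    rw [h1, h2, eA1, eA2, eA3, eA4, eA5, eE1, eE2, eE3, eE4, hL0]
    have EY : y * (p 0).eval y = a 1 * (p 1).eval y + b 1 * (p 0).eval y := by
      have h := congrArg (Polynomial.eval y) hbase
      simp only [eval_mul, eval_add, eval_C, eval_X] at h
      linarith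
    simp only [zero_add]
    linear_combination (p (k : ℕ)).eval x * EY - (p 0).eval y * EX
  · obtain ⟨lm, hlmv⟩ : ∃ j : Fin n, (j : ℕ) = (l : ℕ) - 1 := ⟨⟨(l : ℕ) - 1, by omega⟩, rfl⟩
    have h2 : (∑ j, Em x y k j * A j l) =
        Em x y k lm * A lm l + Em x y k l * A l l + Em x y k lp * A lp l := by
      have hz : ∀ j ∈ Finset.univ, j ∉ ({lm, l, lp} : Finset (Fin n)) →
          Em x y k j * A j l = 0 := by
        intro j _ hj
        simp only [Finset.mem_insert, Finset.mem_singleton, Fin.ext_iff, hlmv, hlpv] at hj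
        push_neg at hj
        rw [hA]
        rw [if_neg (by omega), if_neg (by omega), if_neg (by omega)]
        ring
      rw [← Finset.sum_subset (Finset.subset_univ _) hz]
      rw [Finset.sum_insert (by simp only [Finset.mem_insert, Finset.mem_singleton,
            Fin.ext_iff, hlmv, hlpv]; omega),
          Finset.sum_insert (by simp only [Finset.mem_singleton, Fin.ext_iff, hlpv]; omega),
          Finset.sum_singleton]
      ring
    have eA6 : A lm l = a (l : ℕ) := by
      rw [hA]; rw [if_neg (by omega), if_pos (by omega)]
      rw [hlmv]; congr 1; omega
    have eE5 : Em x y k lm = (p (k : ℕ)).eval x * (p ((l : ℕ) - 1)).eval y := by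
      rw [hEm]; rw [if_pos (by omega), if_neg (by omega), if_neg (by omega), hlmv]; ring
    have EY := EV y (l : ℕ) (by omega)
    rw [h1, h2, eA1, eA2, eA3, eA4, eA5, eA6, eE1, eE2, eE3, eE4, eE5]
    linear_combination (p (k : ℕ)).eval x * EY - (p (l : ℕ)).eval y * EX
end

section
/- For any symmetric tridiagonal $n\times n$ matrix $W$, with $A$ a nondegenerate Jacobi matrix with distinct eigenvalues, orthogonal eigenvector matrix $O$, eigenvalues $\lambda_i$ and spectral weights $q_i$: $W + \sum_{i=1}^n (O^t W O)_{i,i}\, q_i^2\, G(\lambda_i) = \sum_{i>j} (O^t W O)_{i,j}\, q_i q_j\, \frac{B(\lambda_i,\lambda_i) - B(\lambda_j,\lambda_j)}{\lambda_i - \lambda_j}$. -/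
open Polynomial Finset Matrix

/- ===== Auxiliary definitions and general lemmas ===== -/

noncomputable def Smat {n : ℕ} (A W : Matrix (Fin n) (Fin n) ℝ) (r : ℕ) :
    Matrix (Fin n) (Fin n) ℝ :=
  ∑ s ∈ Finset.range r, A ^ s * W * A ^ (r - 1 - s)

noncomputable def Dmat {n : ℕ} (A W : Matrix (Fin n) (Fin n) ℝ) (F : ℝ[X]) :
    Matrix (Fin n) (Fin n) ℝ :=
  F.sum fun r c => c • Smat A W r

def sv (n j : ℕ) : Fin n → ℝ := fun m => if (m : ℕ) = j then 1 else 0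

def vvE (n : ℕ) (v : Fin n → ℝ) (j : ℕ) : ℝ := if h : j < n then v ⟨j, h⟩ else 0

noncomputable def ddE (F : ℝ[X]) (x y : ℝ) : ℝ :=
  F.sum fun r c => c * ∑ s ∈ Finset.range r, x ^ s * y ^ (r - 1 - s)

lemma Smat_succ {n : ℕ} (A W : Matrix (Fin n) (Fin n) ℝ) (m : ℕ) :
    Smat A W (m + 1) = Smat A W m * A + A ^ m * W := by
  unfold Smat
  rw [Finset.sum_range_succ, Finset.sum_mul]
  congr 1
  · refine Finset.sum_congr rfl fun s hs => ?_
    rw [Finset.mem_range] at hs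
    have h1 : m + 1 - 1 - s = (m - 1 - s) + 1 := by omega
    rw [h1, pow_succ, ← mul_assoc]
  · simp

lemma Smat_add {n : ℕ} (A W : Matrix (Fin n) (Fin n) ℝ) (r s : ℕ) :
    Smat A W (r + s) = Smat A W r * A ^ s + A ^ r * Smat A W s := by
  induction s with
  | zero => simp [Smat]
  | succ s ih =>
      rw [← Nat.add_assoc, Smat_succ, ih, Smat_succ, pow_succ, pow_add]
      noncomm_ring

lemma Dmat_monomial {n : ℕ} (A W : Matrix (Fin n) (Fin n) ℝ) (r : ℕ) (c : ℝ) :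
    Dmat A W (monomial r c) = c • Smat A W r := by
  unfold Dmat; exact Polynomial.sum_monomial_index c _ (by simp)

lemma Dmat_add {n : ℕ} (A W : Matrix (Fin n) (Fin n) ℝ) (F G : ℝ[X]) :
    Dmat A W (F + G) = Dmat A W F + Dmat A W G := by
  unfold Dmat; exact Polynomial.sum_add_index F G _ (by simp) (by intros; rw [add_smul])

lemma aeval_monomial_matrix {n : ℕ} (A : Matrix (Fin n) (Fin n) ℝ) (r : ℕ) (c : ℝ) :
    aeval A (monomial r c) = c • A ^ r := by
  rw [Polynomial.aeval_monomial, Algebra.algebraMap_eq_smul_one, smul_mul_assoc, one_mul]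

lemma Dmat_mul {n : ℕ} (A W : Matrix (Fin n) (Fin n) ℝ) (F G : ℝ[X]) :
    Dmat A W (F * G) = Dmat A W F * aeval A G + aeval A F * Dmat A W G := by
  induction F using Polynomial.induction_on' with
  | add F₁ F₂ h1 h2 => rw [add_mul, Dmat_add, h1, h2, Dmat_add, map_add]; noncomm_ring
  | monomial r c =>
      induction G using Polynomial.induction_on' with
      | add G₁ G₂ g1 g2 => rw [mul_add, Dmat_add, g1, g2, Dmat_add, map_add]; noncomm_ring
      | monomial s d =>
          rw [Polynomial.monomial_mul_monomial, Dmat_monomial, Dmat_monomial, Dmat_monomial,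
            aeval_monomial_matrix, aeval_monomial_matrix, Smat_add, smul_add,
            smul_mul_assoc, smul_mul_assoc, mul_smul_comm, mul_smul_comm,
            smul_smul, smul_smul, mul_comm c d]

lemma Dmat_C {n : ℕ} (A W : Matrix (Fin n) (Fin n) ℝ) (c : ℝ) :
    Dmat A W (C c) = 0 := by
  rw [← Polynomial.monomial_zero_left, Dmat_monomial]
  simp [Smat]

lemma Dmat_C_mul {n : ℕ} (A W : Matrix (Fin n) (Fin n) ℝ) (c : ℝ) (F : ℝ[X]) :
    Dmat A W (C c * F) = c • Dmat A W F := by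
  rw [Dmat_mul, Dmat_C, aeval_C, Algebra.algebraMap_eq_smul_one, smul_mul_assoc, one_mul]
  simp

lemma Dmat_X {n : ℕ} (A W : Matrix (Fin n) (Fin n) ℝ) : Dmat A W X = W := by
  rw [← Polynomial.monomial_one_one_eq_X, Dmat_monomial]
  simp [Smat]

lemma aeval_transpose {n : ℕ} (A : Matrix (Fin n) (Fin n) ℝ) (hA : Aᵀ = A) (F : ℝ[X]) :
    (aeval A F)ᵀ = aeval A F := by
  induction F using Polynomial.induction_on' with
  | add F G h1 h2 => rw [map_add, Matrix.transpose_add, h1, h2]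
  | monomial r c => rw [aeval_monomial_matrix, Matrix.transpose_smul, Matrix.transpose_pow, hA]

lemma Smat_transpose {n : ℕ} (A W : Matrix (Fin n) (Fin n) ℝ) (hA : Aᵀ = A) (hW : Wᵀ = W)
    (r : ℕ) : (Smat A W r)ᵀ = Smat A W r := by
  unfold Smat
  rw [Matrix.transpose_sum]
  have h1 : ∀ s ∈ Finset.range r, (A ^ s * W * A ^ (r - 1 - s))ᵀ
      = A ^ (r - 1 - s) * W * A ^ s := by
    intro s hs
    rw [Matrix.transpose_mul, Matrix.transpose_mul, Matrix.transpose_pow, Matrix.transpose_pow,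
      hA, hW, mul_assoc]
  rw [Finset.sum_congr rfl h1]
  conv_rhs => rw [← Finset.sum_range_reflect]
  refine Finset.sum_congr rfl fun s hs => ?_
  rw [Finset.mem_range] at hs
  congr 2
  omega

lemma Dmat_transpose {n : ℕ} (A W : Matrix (Fin n) (Fin n) ℝ) (hA : Aᵀ = A) (hW : Wᵀ = W)
    (F : ℝ[X]) : (Dmat A W F)ᵀ = Dmat A W F := by
  induction F using Polynomial.induction_on' with
  | add F G h1 h2 => rw [Dmat_add, Matrix.transpose_add, h1, h2]
  | monomial r c => rw [Dmat_monomial, Matrix.transpose_smul, Smat_transpose A W hA hW]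

lemma mulVec_sv {n : ℕ} (M : Matrix (Fin n) (Fin n) ℝ) (j : ℕ) (t : Fin n) :
    (M *ᵥ sv n j) t = if h : j < n then M t ⟨j, h⟩ else 0 := by
  unfold mulVec dotProduct sv
  split_ifs with h
  · rw [Finset.sum_eq_single (⟨j, h⟩ : Fin n)]
    · simp
    · intro b _ hb
      simp only [mul_ite, mul_one, mul_zero, ite_eq_right_iff]
      intro hbj; exact absurd (Fin.ext hbj) hb
    · simp
  · refine Finset.sum_eq_zero fun b _ => ?_
    have : (b : ℕ) ≠ j := fun hbj => h (hbj ▸ b.isLt)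
    simp [this]

lemma entry00 {n : ℕ} (M N : Matrix (Fin n) (Fin n) ℝ) (hn : 0 < n) :
    (M * N) ⟨0, hn⟩ ⟨0, hn⟩ = ∑ t, M ⟨0, hn⟩ t * (N *ᵥ sv n 0) t := by
  rw [Matrix.mul_apply]
  refine Finset.sum_congr rfl fun t _ => ?_
  rw [mulVec_sv]
  simp [hn]

lemma half_sum {N : Type*} [Fintype N] [DecidableEq N] [LinearOrder N] (f : N → N → ℝ)
    (hsym : ∀ i j, f i j = f j i) :
    ∑ i, ∑ j ∈ Finset.univ.filter (fun j => j < i), f i j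
      = (1/2) * (∑ i, ∑ j, f i j - ∑ i, f i i) := by
  have key : ∀ (g : N → N → ℝ), ∑ i, ∑ j ∈ Finset.univ.filter (fun j => j < i), g i j
      = ∑ i, ∑ j, if j < i then g i j else 0 :=
    fun g => Finset.sum_congr rfl fun i _ => Finset.sum_filter _ _
  have swap : ∑ i, ∑ j, (if i < j then f i j else 0) = ∑ i, ∑ j, if j < i then f i j else 0 := by
    rw [Finset.sum_comm]
    refine Finset.sum_congr rfl fun i _ => Finset.sum_congr rfl fun j _ => ?_
    by_cases h : j < i <;> simp [h, hsym i j]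
  have expand : ∀ i j, f i j = (if j < i then f i j else 0) + (if i < j then f i j else 0)
      + (if i = j then f i j else 0) := by
    intro i j
    by_cases h1 : j < i
    · have h2 : ¬ i < j := lt_asymm h1
      have h3 : i ≠ j := ne_of_gt h1
      simp [h1, h2, h3]
    · by_cases h2 : i < j
      · have h3 : i ≠ j := ne_of_lt h2
        simp [h1, h2, h3]
      · have h3 : i = j := le_antisymm (le_of_not_gt h1) (le_of_not_gt h2)
        simp [h1, h2, h3]
  have diag : ∀ i, (∑ j, if i = j then f i j else 0) = f i i := by
    intro i
    rw [Finset.sum_ite_eq]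
    simp
  calc ∑ i, ∑ j ∈ Finset.univ.filter (fun j => j < i), f i j
      = ∑ i, ∑ j, if j < i then f i j else 0 := key f
    _ = (1/2) * (∑ i, ∑ j, f i j - ∑ i, f i i) := by
        have exp2 : ∑ i, ∑ j, f i j = (∑ i, ∑ j, if j < i then f i j else 0)
            + (∑ i, ∑ j, if i < j then f i j else 0) + ∑ i, f i i := by
          rw [← Finset.sum_add_distrib, ← Finset.sum_add_distrib]
          refine Finset.sum_congr rfl fun i _ => ?_
          rw [← diag i, ← Finset.sum_add_distrib, ← Finset.sum_add_distrib]
          exact Finset.sum_congr rfl fun j _ => expand i j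
        rw [exp2, swap]
        ring

lemma ddE_mul_sub (F : ℝ[X]) (x y : ℝ) :
    (x - y) * ddE F x y = F.eval x - F.eval y := by
  rw [ddE, Polynomial.sum_def, Finset.mul_sum]
  rw [Polynomial.eval_eq_sum, Polynomial.eval_eq_sum, Polynomial.sum_def, Polynomial.sum_def,
    ← Finset.sum_sub_distrib]
  refine Finset.sum_congr rfl fun r _ => ?_
  have h := geom_sum₂_mul x y r
  calc (x - y) * (F.coeff r * ∑ s ∈ Finset.range r, x ^ s * y ^ (r - 1 - s))
      = F.coeff r * ((∑ s ∈ Finset.range r, x ^ s * y ^ (r - 1 - s)) * (x - y)) := by ring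
    _ = F.coeff r * (x ^ r - y ^ r) := by rw [h]
    _ = F.coeff r * x ^ r - F.coeff r * y ^ r := by ring

lemma ddE_self (F : ℝ[X]) (x : ℝ) :
    ddE F x x = (derivative F).eval x := by
  rw [Polynomial.derivative_apply, Polynomial.sum_def, Polynomial.eval_finset_sum,
    ddE, Polynomial.sum_def]
  refine Finset.sum_congr rfl fun r _ => ?_
  have h1 : ∀ s ∈ Finset.range r, x ^ s * x ^ (r - 1 - s) = x ^ (r - 1) := by
    intro s hs
    rw [Finset.mem_range] at hs
    rw [← pow_add]
    congr 1
    omega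
  rw [Finset.sum_congr rfl h1, Finset.sum_const, Finset.card_range]
  simp [nsmul_eq_mul]
  ring

lemma ddE_symm (F : ℝ[X]) (x y : ℝ) : ddE F x y = ddE F y x := by
  rw [ddE, ddE, Polynomial.sum_def, Polynomial.sum_def]
  refine Finset.sum_congr rfl fun r _ => ?_
  congr 1
  conv_rhs => rw [← Finset.sum_range_reflect]
  refine Finset.sum_congr rfl fun s hs => ?_
  rw [Finset.mem_range] at hs
  have h1 : r - 1 - (r - 1 - s) = s := by omega
  rw [h1, mul_comm]

lemma ddE_add (F G : ℝ[X]) (x y : ℝ) : ddE (F + G) x y = ddE F x y + ddE G x y := by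
  unfold ddE
  exact Polynomial.sum_add_index F G _ (by simp) (by intros; ring)

lemma ddE_monomial (r : ℕ) (c : ℝ) (x y : ℝ) :
    ddE (monomial r c) x y = c * ∑ s ∈ Finset.range r, x ^ s * y ^ (r - 1 - s) := by
  unfold ddE
  exact Polynomial.sum_monomial_index c _ (by simp)

/-- Orthogonality rules for a symmetric tridiagonal `W`:
`W + ∑ᵢ (OᵗWO)ᵢᵢ qᵢ² G(λᵢ) = ∑_{i>j} (OᵗWO)ᵢⱼ qᵢqⱼ (B(λᵢ,λᵢ) - B(λⱼ,λⱼ))/(λᵢ-λⱼ)`. -/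
theorem tridiagonal_orthogonality_rules
    (n : ℕ) (hn : 0 < n)
    (a b : ℕ → ℝ) (p : ℕ → Polynomial ℝ)
    (ha0 : a 0 = 0) (han : a n = 1)
    (hpos : ∀ k, 1 ≤ k → k < n → 0 < a k)
    (h0 : p 0 = 1)
    (hbase : (X : Polynomial ℝ) * p 0 = C (a 1) * p 1 + C (b 1) * p 0)
    (hrec : ∀ k : ℕ, (X : Polynomial ℝ) * p (k + 1) =
      C (a (k + 2)) * p (k + 2) + C (b (k + 2)) * p (k + 1) + C (a (k + 1)) * p k)
    (A : Matrix (Fin n) (Fin n) ℝ)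
    (hA : ∀ i j : Fin n, A i j =
      if (i : ℕ) = (j : ℕ) then b ((i : ℕ) + 1)
      else if (i : ℕ) + 1 = (j : ℕ) then a ((i : ℕ) + 1)
      else if (j : ℕ) + 1 = (i : ℕ) then a ((j : ℕ) + 1)
      else 0)
    (lam : Fin n → ℝ) (hlam : Function.Injective lam)
    (heig : ∀ i, (p n).eval (lam i) = 0)
    (q : Fin n → ℝ) (hq0 : ∀ i, q i ≠ 0)
    (OM : Matrix (Fin n) (Fin n) ℝ)
    (hOM : ∀ (i k : Fin n), OM i k = q i * (p (k : ℕ)).eval (lam i))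
    (hOrth1 : OM * OMᵀ = 1) (hOrth2 : OMᵀ * OM = 1)
    (hdiag : OM * A * OMᵀ = Matrix.diagonal lam)
    (Bm : ℝ → ℝ → Matrix (Fin n) (Fin n) ℝ)
    (hB : ∀ (x y : ℝ) (k l : Fin n), Bm x y k l =
      if (k : ℕ) = (l : ℕ) then
        -(a (l : ℕ)) * (p ((l : ℕ) - 1)).eval x * (p (l : ℕ)).eval y
          + a ((l : ℕ) + 1) * (p (l : ℕ)).eval x * (p ((l : ℕ) + 1)).eval y
          - a (l : ℕ) * (p (l : ℕ)).eval x * (p ((l : ℕ) - 1)).eval y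
          + a ((l : ℕ) + 1) * (p ((l : ℕ) + 1)).eval x * (p (l : ℕ)).eval y
      else if (k : ℕ) = (l : ℕ) + 1 then
        -(a ((l : ℕ) + 1)) * ((p (l : ℕ)).eval x * (p (l : ℕ)).eval y -
          (p ((l : ℕ) + 1)).eval x * (p ((l : ℕ) + 1)).eval y)
      else if (l : ℕ) = (k : ℕ) + 1 then
        -(a ((k : ℕ) + 1)) * ((p (k : ℕ)).eval x * (p (k : ℕ)).eval y -
          (p ((k : ℕ) + 1)).eval x * (p ((k : ℕ) + 1)).eval y)
      else 0)
    (Gm : ℝ → Matrix (Fin n) (Fin n) ℝ)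
    (hG : ∀ (x : ℝ) (k l : Fin n), Gm x k l =
      if (k : ℕ) = (l : ℕ) then
        a (l : ℕ) * (p ((l : ℕ) - 1)).eval x * (derivative (p (l : ℕ))).eval x
          - a ((l : ℕ) + 1) * (p (l : ℕ)).eval x * (derivative (p ((l : ℕ) + 1))).eval x
          + a (l : ℕ) * (p (l : ℕ)).eval x * (derivative (p ((l : ℕ) - 1))).eval x
          - a ((l : ℕ) + 1) * (p ((l : ℕ) + 1)).eval x * (derivative (p (l : ℕ))).eval x
      else if (k : ℕ) = (l : ℕ) + 1 then
        a ((l : ℕ) + 1) * ((p (l : ℕ)).eval x * (derivative (p (l : ℕ))).eval x -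
          (p ((l : ℕ) + 1)).eval x * (derivative (p ((l : ℕ) + 1))).eval x)
      else if (l : ℕ) = (k : ℕ) + 1 then
        a ((k : ℕ) + 1) * ((p (k : ℕ)).eval x * (derivative (p (k : ℕ))).eval x -
          (p ((k : ℕ) + 1)).eval x * (derivative (p ((k : ℕ) + 1))).eval x)
      else 0)
    (W : Matrix (Fin n) (Fin n) ℝ)
    (hWsymm : Wᵀ = W)
    (hWtri : ∀ k l : Fin n, ((k : ℕ) + 1 < (l : ℕ) ∨ (l : ℕ) + 1 < (k : ℕ)) →
      W k l = 0) :
    W + ∑ i, ((OM * W * OMᵀ) i i * q i ^ 2) • Gm (lam i) =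
      ∑ i, ∑ j ∈ Finset.univ.filter (fun j => j < i),
        ((OM * W * OMᵀ) i j * q i * q j * (1 / (lam i - lam j))) •
          (Bm (lam i) (lam i) - Bm (lam j) (lam j)) := by
  -- the distinguished index 0
  have hAsymm : Aᵀ = A := by
    ext i j
    rw [Matrix.transpose_apply, hA, hA]
    split_ifs <;> first | rfl | (exfalso; omega) | (congr 1; omega)
  have apos : ∀ k, 1 ≤ k → k ≤ n → a k ≠ 0 := by
    intro k h1 h2
    rcases eq_or_lt_of_le h2 with h | h
    · rw [h, han]; exact one_ne_zero
    · exact (hpos k h1 h).ne'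
  have sum_ite_val : ∀ (j : ℕ) (g : Fin n → ℝ),
      (∑ t : Fin n, if (t : ℕ) = j then g t else 0) = vvE n g j := by
    intro j g
    unfold vvE
    split_ifs with h
    · rw [Finset.sum_eq_single (⟨j, h⟩ : Fin n)]
      · simp
      · intro t _ ht
        have : (t : ℕ) ≠ j := fun e => ht (Fin.ext e)
        simp [this]
      · simp
    · refine Finset.sum_eq_zero fun t _ => ?_
      have : (t : ℕ) ≠ j := fun e => h (e ▸ t.isLt)
      simp [this]
  -- componentwise action of A
  have mulVecA : ∀ (v : Fin n → ℝ) (m : Fin n), (A *ᵥ v) m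
      = a (m : ℕ) * vvE n v ((m : ℕ) - 1) + b ((m : ℕ) + 1) * v m
        + a ((m : ℕ) + 1) * vvE n v ((m : ℕ) + 1) := by
    intro v m
    have hmn : (m : ℕ) < n := m.isLt
    have point : ∀ t : Fin n, A m t * v t
        = (if ((t : ℕ) = (m : ℕ) - 1 ∧ 1 ≤ (m : ℕ)) then a (m : ℕ) * v t else 0)
          + ((if (t : ℕ) = (m : ℕ) then b ((m : ℕ) + 1) * v t else 0)
          + (if (t : ℕ) = (m : ℕ) + 1 then a ((m : ℕ) + 1) * v t else 0)) := by
      intro t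
      rw [hA]
      split_ifs <;>
        first
          | (exfalso; omega)
          | ring1
          | (rw [show (t : ℕ) + 1 = (m : ℕ) from by omega]; try ring1)
          | (rw [show (m : ℕ) + 1 = (t : ℕ) from by omega]; try ring1)
    have hstart : (A *ᵥ v) m = ∑ t : Fin n, A m t * v t := rfl
    rw [hstart, Finset.sum_congr rfl (fun t _ => point t), Finset.sum_add_distrib,
      Finset.sum_add_distrib]
    have h2 : (∑ t : Fin n, if (t : ℕ) = (m : ℕ) then b ((m : ℕ) + 1) * v t else 0)
        = b ((m : ℕ) + 1) * v m := by
      rw [sum_ite_val (m : ℕ) (fun t => b ((m : ℕ) + 1) * v t)]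
      unfold vvE
      rw [dif_pos hmn]
    have h3 : (∑ t : Fin n, if (t : ℕ) = (m : ℕ) + 1 then a ((m : ℕ) + 1) * v t else 0)
        = a ((m : ℕ) + 1) * vvE n v ((m : ℕ) + 1) := by
      rw [sum_ite_val ((m : ℕ) + 1) (fun t => a ((m : ℕ) + 1) * v t)]
      unfold vvE
      split_ifs <;> simp
    rw [h2, h3]
    rcases Nat.eq_zero_or_pos (m : ℕ) with hm | hm
    · have h1 : (∑ t : Fin n, if ((t : ℕ) = (m : ℕ) - 1 ∧ 1 ≤ (m : ℕ)) then a (m : ℕ) * v t else 0)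
          = 0 := by
        refine Finset.sum_eq_zero fun t _ => ?_
        simp [hm]
      rw [h1, hm, ha0]
      ring
    · have h1 : (∑ t : Fin n, if ((t : ℕ) = (m : ℕ) - 1 ∧ 1 ≤ (m : ℕ)) then a (m : ℕ) * v t else 0)
          = a (m : ℕ) * vvE n v ((m : ℕ) - 1) := by
        have hstep : (∑ t : Fin n, if ((t : ℕ) = (m : ℕ) - 1 ∧ 1 ≤ (m : ℕ)) then a (m : ℕ) * v t else 0)
            = ∑ t : Fin n, if (t : ℕ) = (m : ℕ) - 1 then a (m : ℕ) * v t else 0 := by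
          refine Finset.sum_congr rfl fun t _ => ?_
          by_cases h : (t : ℕ) = (m : ℕ) - 1 <;> simp [h, show (1:ℕ) ≤ (m:ℕ) from hm]
        rw [hstep, sum_ite_val ((m : ℕ) - 1) (fun t => a (m : ℕ) * v t)]
        unfold vvE
        split_ifs <;> simp
      rw [h1]
      ring
  -- action of A on indicator vectors
  have hAsv : ∀ j : ℕ, j < n → A *ᵥ sv n j
      = a j • sv n (j - 1) + b (j + 1) • sv n j + a (j + 1) • sv n (j + 1) := by
    intro j hj
    funext m
    have hmn : (m : ℕ) < n := m.isLt
    rw [mulVecA]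
    simp only [Pi.add_apply, Pi.smul_apply, smul_eq_mul, sv, vvE]
    split_ifs <;>
      first
        | (exfalso; omega)
        | ring1
        | (rw [show (m : ℕ) = j + 1 from by omega]; try ring1)
        | (rw [show (m : ℕ) + 1 = j from by omega]; try ring1)
        | (rw [show (m : ℕ) = j from by omega]; try ring1)
  have haep : ∀ (c : ℝ) (F : ℝ[X]), aeval A (C c * F) = c • aeval A F := by
    intro c F
    rw [_root_.map_mul, aeval_C, Algebra.algebraMap_eq_smul_one, smul_mul_assoc, one_mul]
  -- eigenvector property: p_k(A) e_0 = e_k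
  have hvec2 : ∀ k : ℕ, k + 1 ≤ n →
      (aeval A (p k)) *ᵥ sv n 0 = sv n k ∧ (aeval A (p (k+1))) *ᵥ sv n 0 = sv n (k+1) := by
    intro k
    induction k with
    | zero =>
        intro _
        have hz : (aeval A (p 0)) *ᵥ sv n 0 = sv n 0 := by
          rw [h0, _root_.map_one, Matrix.one_mulVec]
        refine ⟨hz, ?_⟩
        have e := congrArg (aeval A) hbase
        rw [h0, _root_.map_mul, aeval_X, _root_.map_one, mul_one, _root_.map_add, haep, haep, _root_.map_one] at e
        have e2 := congrArg (fun M => M *ᵥ sv n 0) e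
        simp only [Matrix.add_mulVec, Matrix.smul_mulVec, Matrix.one_mulVec] at e2
        have h3 := hAsv 0 hn
        rw [ha0, zero_smul, zero_add] at h3
        funext m
        refine mul_left_cancel₀ (apos 1 le_rfl hn) ?_
        have h4 := congrFun e2 m
        have h5 := congrFun h3 m
        simp only [Pi.add_apply, Pi.smul_apply, smul_eq_mul] at h4 h5
        rw [h5] at h4
        linarith
    | succ j ih =>
        intro hj2
        obtain ⟨ih1, ih2⟩ := ih (by omega)
        refine ⟨ih2, ?_⟩
        have e := congrArg (aeval A) (hrec j)
        rw [_root_.map_mul, aeval_X, _root_.map_add, _root_.map_add, haep, haep, haep] at e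
        have e2 := congrArg (fun M => M *ᵥ sv n 0) e
        simp only [← Matrix.mulVec_mulVec, Matrix.add_mulVec, Matrix.smul_mulVec] at e2
        rw [ih2, ih1] at e2
        have h3 := hAsv (j+1) (by omega)
        rw [Nat.add_sub_cancel] at h3
        rw [h3] at e2
        funext m
        refine mul_left_cancel₀ (apos (j+2) (by omega) (by omega)) ?_
        have h4 := congrFun e2 m
        simp only [Pi.add_apply, Pi.smul_apply, smul_eq_mul] at h4
        linarith
  have hvec : ∀ k : ℕ, k ≤ n → (aeval A (p k)) *ᵥ sv n 0 = sv n k := by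
    intro k hk
    cases k with
    | zero => exact (hvec2 0 hn).1
    | succ j => exact (hvec2 j hk).2
  -- u 0 = 0
  have hu0 : ∀ m : Fin n, (Dmat A W (p 0) *ᵥ sv n 0) m = 0 := by
    intro m
    rw [h0, ← Polynomial.C_1, Dmat_C, Matrix.zero_mulVec]
    rfl
  have hu0' : (Dmat A W (p 0) *ᵥ sv n 0) = 0 := funext hu0
  -- recurrence for u_k = D(p_k) e_0
  have hurec : ∀ k : ℕ, k + 1 ≤ n → ∀ m : Fin n,
      a (k+1) * (Dmat A W (p (k+1)) *ᵥ sv n 0) m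
        = (A *ᵥ (Dmat A W (p k) *ᵥ sv n 0)) m - b (k+1) * (Dmat A W (p k) *ᵥ sv n 0) m
          - a k * (Dmat A W (p (k-1)) *ᵥ sv n 0) m + (W *ᵥ sv n k) m := by
    intro k hk m
    cases k with
    | zero =>
        have e := congrArg (Dmat A W) hbase
        rw [h0, Dmat_mul, Dmat_X, _root_.map_one, mul_one, aeval_X, ← Polynomial.C_1, Dmat_C, mul_zero,
          add_zero, Dmat_add, Dmat_C_mul, Dmat_C_mul, Dmat_C, smul_zero, add_zero] at e
        have e2 := congrArg (fun M => M *ᵥ sv n 0) e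
        simp only [Matrix.smul_mulVec] at e2
        have h4 := congrFun e2 m
        simp only [Pi.smul_apply, smul_eq_mul] at h4
        simp only [Nat.zero_sub]
        rw [hu0', Matrix.mulVec_zero]
        simp only [Pi.zero_apply]
        linarith [h4]
    | succ j =>
        have e := congrArg (Dmat A W) (hrec j)
        rw [Dmat_mul, Dmat_X, aeval_X, Dmat_add, Dmat_add, Dmat_C_mul, Dmat_C_mul, Dmat_C_mul] at e
        have e2 := congrArg (fun M => M *ᵥ sv n 0) e
        simp only [← Matrix.mulVec_mulVec, Matrix.add_mulVec, Matrix.smul_mulVec] at e2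
        rw [hvec (j+1) (by omega)] at e2
        have h4 := congrFun e2 m
        simp only [Pi.add_apply, Pi.smul_apply, smul_eq_mul] at h4
        rw [Nat.add_sub_cancel]
        linarith
  have vvE_zero : ∀ (v : Fin n → ℝ) (K i : ℕ), (∀ m : Fin n, K < (m:ℕ) → v m = 0) → K < i →
      vvE n v i = 0 := by
    intro v K i hv hKi
    unfold vvE
    split_ifs with h
    · exact hv _ hKi
    · rfl
  -- support property of u_k
  have hL1 : ∀ k : ℕ, k ≤ n → ∀ m : Fin n, k < (m:ℕ) → (Dmat A W (p k) *ᵥ sv n 0) m = 0 := by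
    have key : ∀ k : ℕ, k + 1 ≤ n →
        (∀ m : Fin n, k < (m:ℕ) → (Dmat A W (p k) *ᵥ sv n 0) m = 0)
          ∧ (∀ m : Fin n, k + 1 < (m:ℕ) → (Dmat A W (p (k+1)) *ᵥ sv n 0) m = 0) := by
      intro k
      induction k with
      | zero =>
          intro _
          refine ⟨fun m _ => hu0 m, fun m hm => ?_⟩
          have h1 := hurec 0 hn m
          have hW0 : (W *ᵥ sv n 0) m = 0 := by
            rw [mulVec_sv, dif_pos hn]
            refine hWtri _ _ (Or.inr ?_)
            simpa using hm
          rw [hu0', Matrix.mulVec_zero, hW0] at h1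
          simp only [Pi.zero_apply, mul_zero, sub_zero, add_zero] at h1
          have h2 : a 1 * (Dmat A W (p 1) *ᵥ sv n 0) m = 0 := by
            linarith [h1]
          exact (mul_eq_zero.mp h2).resolve_left (apos 1 le_rfl hn)
      | succ j ih =>
          intro hj2
          obtain ⟨ih1, ih2⟩ := ih (by omega)
          refine ⟨ih2, fun m hm => ?_⟩
          have h1 := hurec (j+1) hj2 m
          rw [Nat.add_sub_cancel] at h1
          have hW0 : (W *ᵥ sv n (j+1)) m = 0 := by
            rw [mulVec_sv, dif_pos (by omega : j+1 < n)]
            refine hWtri _ _ (Or.inr ?_)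
            simpa using hm
          have hA0 : (A *ᵥ (Dmat A W (p (j+1)) *ᵥ sv n 0)) m = 0 := by
            rw [mulVecA, vvE_zero _ (j+1) _ ih2 (by omega), vvE_zero _ (j+1) _ ih2 (by omega),
              ih2 m (by omega)]
            ring
          rw [hA0, ih2 m (by omega), ih1 m (by omega), hW0] at h1
          have h2 : a (j+2) * (Dmat A W (p (j+2)) *ᵥ sv n 0) m = 0 := by
            rw [h1]; ring
          exact (mul_eq_zero.mp h2).resolve_left (apos (j+2) (by omega) hj2)
    intro k hk
    cases k with
    | zero => exact fun m _ => hu0 m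
    | succ j => exact fun m hm => (key j hk).2 m hm
  -- identity (i): diagonal entries
  have hI1 : ∀ l : Fin n,
      a ((l:ℕ)+1) * (Dmat A W (p ((l:ℕ)+1)) *ᵥ sv n 0) l
        - a (l:ℕ) * vvE n (Dmat A W (p (l:ℕ)) *ᵥ sv n 0) ((l:ℕ)-1) = W l l := by
    intro l
    have h1 := hurec (l:ℕ) l.isLt l
    rw [mulVecA] at h1
    have hz2 : vvE n (Dmat A W (p (l:ℕ)) *ᵥ sv n 0) ((l:ℕ)+1) = 0 :=
      vvE_zero _ (l:ℕ) _ (hL1 (l:ℕ) (le_of_lt l.isLt)) (by omega)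
    have hz3 : a (l:ℕ) * (Dmat A W (p ((l:ℕ)-1)) *ᵥ sv n 0) l = 0 := by
      rcases Nat.eq_zero_or_pos (l:ℕ) with h|h
      · rw [h, ha0]; ring
      · rw [hL1 ((l:ℕ)-1) (by omega) l (by omega)]; ring
    have hz4 : (W *ᵥ sv n (l:ℕ)) l = W l l := by
      rw [mulVec_sv, dif_pos l.isLt]
    rw [hz2, hz4] at h1
    linarith
  -- identity (ii): subdiagonal entries
  have hI2 : ∀ (k l : Fin n), (k:ℕ) = (l:ℕ) + 1 →
      a ((l:ℕ)+1) * ((Dmat A W (p ((l:ℕ)+1)) *ᵥ sv n 0) k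
        - (Dmat A W (p (l:ℕ)) *ᵥ sv n 0) l) = W k l := by
    intro k l hkl
    have h1 := hurec (l:ℕ) l.isLt k
    rw [mulVecA] at h1
    have hz1 : vvE n (Dmat A W (p (l:ℕ)) *ᵥ sv n 0) ((k:ℕ)-1)
        = (Dmat A W (p (l:ℕ)) *ᵥ sv n 0) l := by
      rw [show (k:ℕ) - 1 = (l:ℕ) from by omega]
      unfold vvE
      rw [dif_pos l.isLt]
    have hz2 : (Dmat A W (p (l:ℕ)) *ᵥ sv n 0) k = 0 :=
      hL1 (l:ℕ) (le_of_lt l.isLt) k (by omega)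
    have hz3 : vvE n (Dmat A W (p (l:ℕ)) *ᵥ sv n 0) ((k:ℕ)+1) = 0 :=
      vvE_zero _ (l:ℕ) _ (hL1 (l:ℕ) (le_of_lt l.isLt)) (by omega)
    have hz4 : a (l:ℕ) * (Dmat A W (p ((l:ℕ)-1)) *ᵥ sv n 0) k = 0 := by
      rcases Nat.eq_zero_or_pos (l:ℕ) with h|h
      · rw [h, ha0]; ring
      · rw [hL1 ((l:ℕ)-1) (by omega) k (by omega)]; ring
    have hz5 : (W *ᵥ sv n (l:ℕ)) k = W k l := by
      rw [mulVec_sv, dif_pos l.isLt]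
    have hz6 : a (k:ℕ) = a ((l:ℕ)+1) := by rw [hkl]
    rw [hz1, hz2, hz3, hz5, hz6] at h1
    linarith
  -- entry symmetry of Dmat and aeval
  have hDsymE : ∀ (F : ℝ[X]) (i j : Fin n), Dmat A W F i j = Dmat A W F j i := by
    intro F i j
    conv_lhs => rw [← Dmat_transpose A W hAsymm hWsymm F]
    rfl
  have hPsymE : ∀ (F : ℝ[X]) (i j : Fin n), aeval A F i j = aeval A F j i := by
    intro F i j
    conv_lhs => rw [← aeval_transpose A hAsymm F]
    rfl
  -- the quantity Ψ(p_k p_m)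
  have hPP : ∀ k m : ℕ, k ≤ n → m ≤ n →
      Dmat A W (p k * p m) ⟨0, hn⟩ ⟨0, hn⟩
        = vvE n (Dmat A W (p k) *ᵥ sv n 0) m + vvE n (Dmat A W (p m) *ᵥ sv n 0) k := by
    intro k m hk hm
    rw [Dmat_mul, Matrix.add_apply]
    congr 1
    · rw [entry00 _ _ hn, hvec m hm]
      have hpt : ∀ t : Fin n, Dmat A W (p k) ⟨0, hn⟩ t * sv n m t
          = if (t:ℕ) = m then Dmat A W (p k) ⟨0, hn⟩ t else 0 := by
        intro t; unfold sv; split_ifs <;> simp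
      rw [Finset.sum_congr rfl fun t _ => hpt t,
        sum_ite_val m (fun t => Dmat A W (p k) ⟨0, hn⟩ t)]
      unfold vvE
      split_ifs with h
      · have h2 := mulVec_sv (Dmat A W (p k)) 0 (⟨m, h⟩ : Fin n)
        rw [dif_pos hn] at h2
        show Dmat A W (p k) ⟨0, hn⟩ ⟨m, h⟩ = (Dmat A W (p k) *ᵥ sv n 0) ⟨m, h⟩
        rw [h2, hDsymE]
      · rfl
    · rw [entry00 _ _ hn]
      have hpt : ∀ t : Fin n, aeval A (p k) ⟨0, hn⟩ t * (Dmat A W (p m) *ᵥ sv n 0) t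
          = sv n k t * (Dmat A W (p m) *ᵥ sv n 0) t := by
        intro t
        rw [hPsymE]
        have h2 := mulVec_sv (aeval A (p k)) 0 t
        rw [dif_pos hn] at h2
        rw [← h2, hvec k hk]
      rw [Finset.sum_congr rfl fun t _ => hpt t]
      have hpt2 : ∀ t : Fin n, sv n k t * (Dmat A W (p m) *ᵥ sv n 0) t
          = if (t:ℕ) = k then (Dmat A W (p m) *ᵥ sv n 0) t else 0 := by
        intro t; unfold sv; split_ifs <;> simp
      rw [Finset.sum_congr rfl fun t _ => hpt2 t,
        sum_ite_val k (fun t => (Dmat A W (p m) *ᵥ sv n 0) t)]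
  -- spectral decomposition of powers of A
  have hAdec : A = OMᵀ * Matrix.diagonal lam * OM := by
    calc A = 1 * A * 1 := by rw [one_mul, mul_one]
      _ = (OMᵀ * OM) * A * (OMᵀ * OM) := by rw [hOrth2]
      _ = OMᵀ * (OM * A * OMᵀ) * OM := by noncomm_ring
      _ = OMᵀ * Matrix.diagonal lam * OM := by rw [hdiag]
  have hApow : ∀ s : ℕ, A ^ s = OMᵀ * Matrix.diagonal (fun i => lam i ^ s) * OM := by
    intro s
    induction s with
    | zero =>
        have h1 : (fun i : Fin n => lam i ^ 0) = fun _ => (1:ℝ) := funext fun i => pow_zero _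
        rw [pow_zero, h1, Matrix.diagonal_one, mul_one, hOrth2]
    | succ s ih =>
        rw [pow_succ, ih]
        conv_lhs => rw [hAdec]
        have h1 : (fun i : Fin n => lam i ^ s * lam i) = fun i => lam i ^ (s+1) :=
          funext fun i => (pow_succ _ _).symm
        calc (OMᵀ * Matrix.diagonal (fun i => lam i ^ s) * OM) * (OMᵀ * Matrix.diagonal lam * OM)
            = OMᵀ * Matrix.diagonal (fun i => lam i ^ s) * (OM * OMᵀ)
              * Matrix.diagonal lam * OM := by noncomm_ring
          _ = OMᵀ * (Matrix.diagonal (fun i => lam i ^ s) * Matrix.diagonal lam) * OM := by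
              rw [hOrth1, mul_one]; noncomm_ring
          _ = OMᵀ * Matrix.diagonal (fun i => lam i ^ (s+1)) * OM := by
              rw [Matrix.diagonal_mul_diagonal, h1]
  have hz0 : ((⟨0, hn⟩ : Fin n) : ℕ) = 0 := rfl
  have hspec : ∀ s t : ℕ, (A ^ s * W * A ^ t) ⟨0,hn⟩ ⟨0,hn⟩
      = ∑ i, ∑ j, (OM * W * OMᵀ) i j * q i * q j * (lam i ^ s * lam j ^ t) := by
    intro s t
    have hdecomp : A ^ s * W * A ^ t
        = OMᵀ * (Matrix.diagonal (fun i => lam i ^ s) * (OM * W * OMᵀ)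
            * Matrix.diagonal (fun i => lam i ^ t)) * OM := by
      rw [hApow s, hApow t]
      have hW2 : W = OMᵀ * (OM * W * OMᵀ) * OM := by
        calc W = 1 * W * 1 := by rw [one_mul, mul_one]
          _ = (OMᵀ * OM) * W * (OMᵀ * OM) := by rw [hOrth2]
          _ = OMᵀ * (OM * W * OMᵀ) * OM := by noncomm_ring
      conv_lhs => rw [hW2]
      calc (OMᵀ * Matrix.diagonal (fun i => lam i ^ s) * OM) * (OMᵀ * (OM * W * OMᵀ) * OM)
            * (OMᵀ * Matrix.diagonal (fun i => lam i ^ t) * OM)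
          = OMᵀ * Matrix.diagonal (fun i => lam i ^ s) * (OM * OMᵀ) * (OM * W * OMᵀ)
            * (OM * OMᵀ) * Matrix.diagonal (fun i => lam i ^ t) * OM := by noncomm_ring
        _ = OMᵀ * (Matrix.diagonal (fun i => lam i ^ s) * (OM * W * OMᵀ)
            * Matrix.diagonal (fun i => lam i ^ t)) * OM := by
            rw [hOrth1, mul_one, mul_one]; noncomm_ring
    rw [hdecomp, Matrix.mul_apply]
    rw [Finset.sum_congr rfl (fun j (_ : j ∈ Finset.univ) => by
      rw [Matrix.mul_apply, Finset.sum_mul])]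
    rw [Finset.sum_comm]
    refine Finset.sum_congr rfl fun i _ => Finset.sum_congr rfl fun j _ => ?_
    rw [Matrix.transpose_apply, Matrix.mul_diagonal, Matrix.diagonal_mul,
      hOM i ⟨0,hn⟩, hOM j ⟨0,hn⟩]
    simp only [hz0, h0, Polynomial.eval_one]
    ring
  -- the spectral sum of divided differences
  have hspecF : ∀ F : ℝ[X],
      (∑ i, ∑ j, (OM * W * OMᵀ) i j * q i * q j * ddE F (lam i) (lam j))
        = Dmat A W F ⟨0,hn⟩ ⟨0,hn⟩ := by
    intro F
    induction F using Polynomial.induction_on' with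
    | add F G hF hG =>
        rw [Dmat_add, Matrix.add_apply, ← hF, ← hG, ← Finset.sum_add_distrib]
        refine Finset.sum_congr rfl fun i _ => ?_
        rw [← Finset.sum_add_distrib]
        refine Finset.sum_congr rfl fun j _ => ?_
        rw [ddE_add]
        ring
    | monomial r c =>
        have hR : Dmat A W (monomial r c) ⟨0,hn⟩ ⟨0,hn⟩
            = ∑ s ∈ Finset.range r, c * ((A ^ s * W * A ^ (r-1-s)) ⟨0,hn⟩ ⟨0,hn⟩) := by
          rw [Dmat_monomial, Matrix.smul_apply, smul_eq_mul]
          unfold Smat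
          rw [Matrix.sum_apply, Finset.mul_sum]
        rw [hR]
        have hL : ∀ i j : Fin n,
            (OM*W*OMᵀ) i j * q i * q j * ddE (monomial r c) (lam i) (lam j)
            = ∑ s ∈ Finset.range r,
                c * ((OM*W*OMᵀ) i j * q i * q j * (lam i ^ s * lam j ^ (r-1-s))) := by
          intro i j
          rw [ddE_monomial, Finset.mul_sum, Finset.mul_sum]
          refine Finset.sum_congr rfl fun s _ => ?_
          ring
        rw [Finset.sum_congr rfl (fun i (_ : i ∈ (Finset.univ : Finset (Fin n))) =>
          Finset.sum_congr rfl fun j _ => hL i j)]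
        rw [Finset.sum_congr rfl (fun i (_ : i ∈ (Finset.univ : Finset (Fin n))) =>
          Finset.sum_comm)]
        rw [Finset.sum_comm]
        refine Finset.sum_congr rfl fun s hs => ?_
        rw [hspec s (r-1-s), Finset.mul_sum]
        refine Finset.sum_congr rfl fun i _ => ?_
        rw [Finset.mul_sum]
  -- symmetry of the conjugated matrix
  have hcsym : ∀ i j : Fin n, (OM * W * OMᵀ) i j = (OM * W * OMᵀ) j i := by
    intro i j
    have h1 : (OM * W * OMᵀ)ᵀ = OM * W * OMᵀ := by
      rw [Matrix.transpose_mul, Matrix.transpose_mul, Matrix.transpose_transpose, hWsymm,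
        ← mul_assoc]
    conv_lhs => rw [← h1]
    rfl
  -- final assembly
  ext k l
  simp only [Matrix.add_apply, Matrix.sum_apply, Matrix.smul_apply, Matrix.sub_apply,
    smul_eq_mul]
  have main : ∀ F : ℝ[X],
      (∀ x : ℝ, Bm x x k l = F.eval x) →
      (∀ x : ℝ, Gm x k l = -(1/2) * (derivative F).eval x) →
      W k l = (1/2) * Dmat A W F ⟨0,hn⟩ ⟨0,hn⟩ →
      W k l + ∑ i, (OM * W * OMᵀ) i i * q i ^ 2 * Gm (lam i) k l
        = ∑ i, ∑ j ∈ Finset.univ.filter (fun j => j < i),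
            (OM * W * OMᵀ) i j * q i * q j * (1 / (lam i - lam j))
              * (Bm (lam i) (lam i) k l - Bm (lam j) (lam j) k l) := by
    intro F hF1 hF2 hF3
    have step1 : ∀ i j : Fin n, j < i →
        (OM * W * OMᵀ) i j * q i * q j * (1 / (lam i - lam j))
            * (Bm (lam i) (lam i) k l - Bm (lam j) (lam j) k l)
          = (OM * W * OMᵀ) i j * q i * q j * ddE F (lam i) (lam j) := by
      intro i j hij
      have hne : lam i - lam j ≠ 0 := sub_ne_zero.mpr (hlam.ne (ne_of_gt hij))
      rw [hF1, hF1, ← ddE_mul_sub F (lam i) (lam j)]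
      field_simp
    rw [Finset.sum_congr rfl (fun i (_ : i ∈ Finset.univ) => Finset.sum_congr rfl
      (fun j hj => step1 i j (by
        simp only [Finset.mem_filter] at hj
        exact hj.2)))]
    rw [half_sum (fun i j => (OM * W * OMᵀ) i j * q i * q j * ddE F (lam i) (lam j))
      (fun i j => by
        show (OM * W * OMᵀ) i j * q i * q j * ddE F (lam i) (lam j)
          = (OM * W * OMᵀ) j i * q j * q i * ddE F (lam j) (lam i)
        rw [hcsym i j, ddE_symm]
        ring1)]
    rw [hspecF F]
    have step2 : ∑ i, (OM * W * OMᵀ) i i * q i ^ 2 * Gm (lam i) k l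
        = -(1/2) * ∑ i, (OM * W * OMᵀ) i i * q i * q i * ddE F (lam i) (lam i) := by
      rw [Finset.mul_sum]
      refine Finset.sum_congr rfl fun i _ => ?_
      rw [hF2 (lam i), ddE_self]
      ring
    rw [step2, hF3]
    ring
  by_cases hkl : (k:ℕ) = (l:ℕ)
  · -- diagonal case
    refine main (C (2 * a ((l:ℕ)+1)) * (p (l:ℕ) * p ((l:ℕ)+1))
        + C (-(2 * a (l:ℕ))) * (p ((l:ℕ)-1) * p (l:ℕ))) ?_ ?_ ?_
    · intro x
      rw [hB, if_pos hkl]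
      simp only [Polynomial.eval_add, Polynomial.eval_mul, Polynomial.eval_C]
      ring1
    · intro x
      rw [hG, if_pos hkl]
      simp only [derivative_add, Polynomial.derivative_C_mul, derivative_mul, Polynomial.derivative_C, Polynomial.eval_zero, zero_mul, mul_zero,
        Polynomial.eval_add, Polynomial.eval_mul, Polynomial.eval_C]
      ring1
    · have hkeq : k = l := Fin.ext hkl
      rw [hkeq]
      rw [Dmat_add, Dmat_C_mul, Dmat_C_mul, Matrix.add_apply, Matrix.smul_apply,
        Matrix.smul_apply, smul_eq_mul, smul_eq_mul,
        hPP (l:ℕ) ((l:ℕ)+1) (le_of_lt l.isLt) l.isLt,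
        hPP ((l:ℕ)-1) (l:ℕ) (by omega) (le_of_lt l.isLt)]
      have e1 : vvE n (Dmat A W (p (l:ℕ)) *ᵥ sv n 0) ((l:ℕ)+1) = 0 :=
        vvE_zero _ (l:ℕ) _ (hL1 (l:ℕ) (le_of_lt l.isLt)) (by omega)
      have e2 : vvE n (Dmat A W (p ((l:ℕ)+1)) *ᵥ sv n 0) (l:ℕ)
          = (Dmat A W (p ((l:ℕ)+1)) *ᵥ sv n 0) l := by
        unfold vvE
        rw [dif_pos l.isLt]
      have e3 : vvE n (Dmat A W (p ((l:ℕ)-1)) *ᵥ sv n 0) (l:ℕ) = 0 := by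
        rcases Nat.eq_zero_or_pos (l:ℕ) with h|h
        · rw [h]
          unfold vvE
          rw [dif_pos hn]
          exact hu0 _
        · exact vvE_zero _ ((l:ℕ)-1) _ (hL1 ((l:ℕ)-1) (by omega)) (by omega)
      rw [e1, e2, e3]
      linear_combination (-1 : ℝ) * hI1 l
  · by_cases hk2 : (k:ℕ) = (l:ℕ)+1
    · -- subdiagonal case
      refine main (C (-(a ((l:ℕ)+1))) * (p (l:ℕ) * p (l:ℕ))
          + C (a ((l:ℕ)+1)) * (p ((l:ℕ)+1) * p ((l:ℕ)+1))) ?_ ?_ ?_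
      · intro x
        rw [hB, if_neg hkl, if_pos hk2]
        simp only [Polynomial.eval_add, Polynomial.eval_mul, Polynomial.eval_C]
        ring1
      · intro x
        rw [hG, if_neg hkl, if_pos hk2]
        simp only [derivative_add, Polynomial.derivative_C_mul, derivative_mul, Polynomial.derivative_C, Polynomial.eval_zero, zero_mul, mul_zero,
          Polynomial.eval_add, Polynomial.eval_mul, Polynomial.eval_C]
        ring1
      · have hkn : (l:ℕ)+1 < n := by
          have := k.isLt
          omega
        rw [Dmat_add, Dmat_C_mul, Dmat_C_mul, Matrix.add_apply, Matrix.smul_apply,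
          Matrix.smul_apply, smul_eq_mul, smul_eq_mul,
          hPP (l:ℕ) (l:ℕ) (le_of_lt l.isLt) (le_of_lt l.isLt),
          hPP ((l:ℕ)+1) ((l:ℕ)+1) l.isLt l.isLt]
        have e1 : vvE n (Dmat A W (p (l:ℕ)) *ᵥ sv n 0) (l:ℕ)
            = (Dmat A W (p (l:ℕ)) *ᵥ sv n 0) l := by
          unfold vvE
          rw [dif_pos l.isLt]
        have e2 : vvE n (Dmat A W (p ((l:ℕ)+1)) *ᵥ sv n 0) ((l:ℕ)+1)
            = (Dmat A W (p ((l:ℕ)+1)) *ᵥ sv n 0) k := by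
          unfold vvE
          rw [dif_pos hkn]
          congr 1
          exact Fin.ext hk2.symm
        rw [e1, e2]
        linear_combination (-1 : ℝ) * hI2 k l hk2
    · by_cases hl2 : (l:ℕ) = (k:ℕ)+1
      · -- superdiagonal case
        refine main (C (-(a ((k:ℕ)+1))) * (p (k:ℕ) * p (k:ℕ))
            + C (a ((k:ℕ)+1)) * (p ((k:ℕ)+1) * p ((k:ℕ)+1))) ?_ ?_ ?_
        · intro x
          rw [hB, if_neg hkl, if_neg hk2, if_pos hl2]
          simp only [Polynomial.eval_add, Polynomial.eval_mul, Polynomial.eval_C]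
          ring1
        · intro x
          rw [hG, if_neg hkl, if_neg hk2, if_pos hl2]
          simp only [derivative_add, Polynomial.derivative_C_mul, derivative_mul, Polynomial.derivative_C, Polynomial.eval_zero, zero_mul, mul_zero,
            Polynomial.eval_add, Polynomial.eval_mul, Polynomial.eval_C]
          ring1
        · have hWs : W k l = W l k := by
            have h1 := congrFun (congrFun hWsymm k) l
            exact h1.symm
          have hkn : (k:ℕ)+1 < n := by
            have := l.isLt
            omega
          rw [Dmat_add, Dmat_C_mul, Dmat_C_mul, Matrix.add_apply, Matrix.smul_apply,
            Matrix.smul_apply, smul_eq_mul, smul_eq_mul,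
            hPP (k:ℕ) (k:ℕ) (le_of_lt k.isLt) (le_of_lt k.isLt),
            hPP ((k:ℕ)+1) ((k:ℕ)+1) k.isLt k.isLt]
          have e1 : vvE n (Dmat A W (p (k:ℕ)) *ᵥ sv n 0) (k:ℕ)
              = (Dmat A W (p (k:ℕ)) *ᵥ sv n 0) k := by
            unfold vvE
            rw [dif_pos k.isLt]
          have e2 : vvE n (Dmat A W (p ((k:ℕ)+1)) *ᵥ sv n 0) ((k:ℕ)+1)
              = (Dmat A W (p ((k:ℕ)+1)) *ᵥ sv n 0) l := by
            unfold vvE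
            rw [dif_pos hkn]
            congr 1
            exact Fin.ext hl2.symm
          rw [e1, e2]
          linear_combination hWs - hI2 l k hl2
      · -- far off-diagonal case
        have hW0 : W k l = 0 := hWtri k l (by omega)
        have hB0 : ∀ x : ℝ, Bm x x k l = 0 := fun x => by
          rw [hB, if_neg hkl, if_neg hk2, if_neg hl2]
        have hG0 : ∀ x : ℝ, Gm x k l = 0 := fun x => by
          rw [hG, if_neg hkl, if_neg hk2, if_neg hl2]
        rw [hW0]
        simp [hB0, hG0]
end
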